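/- arXiv:1906.07619 — 4 statements merged into one kernel-verified Lean document; each statement's English description precedes it below -/
import Mathlib

section
/- Let G be a maximal 3-γc-vertex critical graph. Then the independence number of G is at most the minimum degree plus one, i.e., α(G) ≤ δ(G) + 1. -/
open Finset

variable {V : Type*}

/-- `D` is a connected dominating set of `G`: every vertex is in `D` or adjacent to a
vertex of `D`, and the subgraph induced by `D` is connected. -/
def IsConnDomSet (G : SimpleGraph V) (D : Set V) : Prop :=
  (∀ v : V, v ∈ D ∨ ∃ u ∈ D, G.Adj u v) ∧ (G.induce D).Connected

/-- The connected domination number `γc(G)`. -/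
noncomputable def gammaC (G : SimpleGraph V) [Fintype V] : ℕ :=
  sInf {k | ∃ D : Finset V, D.card = k ∧ IsConnDomSet G ↑D}

/-- The independence number `α(G)`. -/
noncomputable def alpha (G : SimpleGraph V) [Fintype V] : ℕ :=
  sSup {k | ∃ I : Finset V, I.card = k ∧ (↑I : Set V).Pairwise fun u v => ¬ G.Adj u v}

/-- The clique number `ω(G)`. -/
noncomputable def omegaNum (G : SimpleGraph V) [Fintype V] : ℕ :=
  sSup {k | ∃ W : Finset V, W.card = k ∧ (↑W : Set V).Pairwise G.Adj}

/-- The minimum degree `δ(G)`. -/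
noncomputable def minDeg (G : SimpleGraph V) [Fintype V] : ℕ :=
  sInf {k | ∃ v : V, (G.neighborSet v).ncard = k}

/-- The vertex connectivity `κ(G)`: the minimum size of a set of vertices whose
deletion leaves a graph that is disconnected or has at most one vertex
(so `κ = n - 1` for the complete graph on `n` vertices). -/
noncomputable def kappa (G : SimpleGraph V) [Fintype V] : ℕ :=
  sInf {k | ∃ S : Finset V, S.card = k ∧
    (¬ (G.induce (↑S : Set V)ᶜ).Connected ∨ ((↑S : Set V)ᶜ).Subsingleton)}

/-- `G` is `3`-`γc`-edge critical: `γc(G) = 3` and adding any missing edge decreases `γc`. -/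
def EdgeCritical3 (G : SimpleGraph V) [Fintype V] : Prop :=
  gammaC G = 3 ∧ ∀ u v : V, u ≠ v → ¬ G.Adj u v →
    gammaC (G ⊔ SimpleGraph.fromEdgeSet {s(u, v)}) < 3

/-- `G` is `3`-`γc`-vertex critical: `G` is `2`-connected, `γc(G) = 3` and deleting any
vertex decreases `γc`. -/
def VertexCritical3 (G : SimpleGraph V) [Fintype V] [DecidableEq V] : Prop :=
  2 ≤ kappa G ∧ gammaC G = 3 ∧ ∀ v : V, gammaC (G.induce {w | w ≠ v}) < 3

/-- `G` is maximal `3`-`γc`-vertex critical. -/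
def MaximalVertexCritical3 (G : SimpleGraph V) [Fintype V] [DecidableEq V] : Prop :=
  EdgeCritical3 G ∧ VertexCritical3 G

set_option linter.unusedSectionVars false

section helpers
variable {W : Type*}

lemma conn_singleton (H : SimpleGraph W) (a : W) : (H.induce {a}).Connected := by
  haveI : Nonempty ({a} : Set W) := ⟨⟨a, rfl⟩⟩
  constructor
  rintro ⟨u, hu⟩ ⟨v, hv⟩
  simp only [Set.mem_singleton_iff] at hu hv
  subst hu; subst hv
  rfl

lemma conn_pair (H : SimpleGraph W) {a b : W} (hab : H.Adj a b) :
    (H.induce {a, b}).Connected := by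
  haveI : Nonempty ({a, b} : Set W) := ⟨⟨a, Or.inl rfl⟩⟩
  constructor
  · rintro ⟨u, hu⟩ ⟨v, hv⟩
    simp only [Set.mem_insert_iff, Set.mem_singleton_iff] at hu hv
    have key : ∀ (x y : W) (hx : x ∈ ({a, b} : Set W)) (hy : y ∈ ({a, b} : Set W)),
        x = y → (H.induce {a, b}).Reachable ⟨x, hx⟩ ⟨y, hy⟩ := by
      rintro x y hx hy rfl; rfl
    rcases hu with rfl | rfl <;> rcases hv with rfl | rfl
    · rfl
    · exact SimpleGraph.Adj.reachable (by simpa using hab)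
    · exact SimpleGraph.Adj.reachable (by simpa using hab.symm)
    · rfl

lemma pair_adj (H : SimpleGraph W) {a b : W} (hne : a ≠ b)
    (hconn : (H.induce {a, b}).Connected) : H.Adj a b := by
  have ha : a ∈ ({a, b} : Set W) := Or.inl rfl
  have hb : b ∈ ({a, b} : Set W) := Or.inr rfl
  obtain ⟨p⟩ := hconn.preconnected ⟨a, ha⟩ ⟨b, hb⟩
  cases p with
  | nil => exact absurd rfl hne
  | @cons _ w _ hadj p' =>
      have h1 : H.Adj a ↑w := hadj
      rcases w.2 with h | h
      · rw [h] at h1; exact absurd h1 (H.irrefl)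
      · rwa [h] at h1
end helpers



section basics
variable (G : SimpleGraph V) [Fintype V] [DecidableEq V]

lemma noCDS2 (hγ : gammaC G = 3) (D : Finset V) (hD : IsConnDomSet G ↑D) :
    3 ≤ D.card := by
  have : D.card ∈ {k | ∃ D : Finset V, D.card = k ∧ IsConnDomSet G ↑D} := ⟨D, rfl, hD⟩
  have := Nat.sInf_le this
  rwa [show sInf {k | ∃ D : Finset V, D.card = k ∧ IsConnDomSet G ↑D} = gammaC G from rfl,
    hγ] at this

lemma K1single (hγ : gammaC G = 3) (a : V) : ¬ ∀ v, v = a ∨ G.Adj a v := by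
  intro hdom
  have hcds : IsConnDomSet G ↑({a} : Finset V) := by
    constructor
    · intro v
      rcases hdom v with rfl | hv
      · exact Or.inl (by simp)
      · exact Or.inr ⟨a, by simp, hv⟩
    · rw [Finset.coe_singleton]; exact conn_singleton G a
  have := noCDS2 G hγ {a} hcds
  simp at this

lemma K1pair (hγ : gammaC G = 3) (a b : V) (hab : G.Adj a b)
    (hdom : ∀ v, v = a ∨ v = b ∨ G.Adj a v ∨ G.Adj b v) : False := by
  have hcds : IsConnDomSet G ↑({a, b} : Finset V) := by
    constructor
    · intro v
      rcases hdom v with rfl | rfl | hv | hv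
      · exact Or.inl (by simp)
      · exact Or.inl (by simp)
      · exact Or.inr ⟨a, by simp, hv⟩
      · exact Or.inr ⟨b, by simp, hv⟩
    · rw [Finset.coe_insert, Finset.coe_singleton]; exact conn_pair G hab
  have h3 := noCDS2 G hγ _ hcds
  have : ({a, b} : Finset V).card ≤ 2 := Finset.card_insert_le _ _ |>.trans (by simp)
  omega

lemma exCDS3 (hγ : gammaC G = 3) : ∃ D : Finset V, D.card = 3 ∧ IsConnDomSet G ↑D := by
  have hne : {k | ∃ D : Finset V, D.card = k ∧ IsConnDomSet G ↑D}.Nonempty := by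
    by_contra hemp
    rw [Set.not_nonempty_iff_eq_empty] at hemp
    have : gammaC G = 0 := by rw [gammaC, hemp, Nat.sInf_empty]
    omega
  have := Nat.sInf_mem hne
  rw [show sInf {k | ∃ D : Finset V, D.card = k ∧ IsConnDomSet G ↑D} = gammaC G from rfl,
    hγ] at this
  exact this

lemma cardV3 (hγ : gammaC G = 3) : 3 ≤ Fintype.card V := by
  obtain ⟨D, hcard, _⟩ := exCDS3 G hγ
  calc 3 = D.card := hcard.symm
    _ ≤ Fintype.card V := Finset.card_le_univ D

lemma Hconn (hκ : 2 ≤ kappa G) (y : V) : (G.induce {w | w ≠ y}).Connected := by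
  have hset : ({w | w ≠ y} : Set V) = (↑({y} : Finset V) : Set V)ᶜ := by
    ext v; simp [Ne]
  rw [hset]
  by_contra hnc
  have h1 : 1 ∈ {k | ∃ S : Finset V, S.card = k ∧
      (¬ (G.induce (↑S : Set V)ᶜ).Connected ∨ ((↑S : Set V)ᶜ).Subsingleton)} :=
    ⟨{y}, by simp, Or.inl hnc⟩
  have := Nat.sInf_le h1
  rw [show sInf _ = kappa G from rfl] at this
  omega

end basics

section k3sec
variable (G : SimpleGraph V) [Fintype V] [DecidableEq V]

lemma small_cds {W : Type*} [Fintype W] (H : SimpleGraph W)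
    (hne : {k | ∃ D : Finset W, D.card = k ∧ IsConnDomSet H ↑D}.Nonempty)
    (hlt : gammaC H < 3) : ∃ D : Finset W, D.card ≤ 2 ∧ IsConnDomSet H ↑D := by
  have hm := Nat.sInf_mem hne
  obtain ⟨D, hcard, hD⟩ := hm
  refine ⟨D, ?_, hD⟩
  have : sInf {k | ∃ D : Finset W, D.card = k ∧ IsConnDomSet H ↑D} = gammaC H := rfl
  omega

lemma univ_cds {W : Type*} [Fintype W] (H : SimpleGraph W) (hc : H.Connected) :
    IsConnDomSet H ↑(Finset.univ : Finset W) := by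
  constructor
  · intro v; exact Or.inl (by simp)
  · rw [Finset.coe_univ]
    exact (SimpleGraph.induceUnivIso H).connected_iff.mpr hc

lemma K3 (hγ : gammaC G = 3) (hκ : 2 ≤ kappa G)
    (hvc : ∀ y : V, gammaC (G.induce {w | w ≠ y}) < 3) (y : V) :
    ∃ d e : V, (d = e ∨ G.Adj d e) ∧ d ≠ y ∧ e ≠ y ∧ ¬ G.Adj d y ∧ ¬ G.Adj e y ∧
      ∀ v, v ≠ y → (v = d ∨ v = e ∨ G.Adj d v ∨ G.Adj e v) := by
  classical
  set H := G.induce {w | w ≠ y} with hH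
  obtain ⟨D, hcard, hdom, hconn⟩ :=
    small_cds H ⟨(Finset.univ : Finset ↥{w | w ≠ y}).card, Finset.univ, rfl,
      univ_cds H (Hconn G hκ y)⟩ (hvc y)
  obtain ⟨x0⟩ := hconn.nonempty
  have hDne : D.Nonempty := ⟨x0.1, Finset.mem_coe.mp x0.2⟩
  have h1 : 1 ≤ D.card := Finset.card_pos.mpr hDne
  interval_cases hDc : D.card
  · -- card 1
    obtain ⟨d', hd'⟩ := Finset.card_eq_one.mp hDc
    have hdm : ∀ v : V, v ≠ y → (v = ↑d' ∨ G.Adj ↑d' v) := by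
      intro v hv
      rcases hdom ⟨v, hv⟩ with hmem | ⟨u, hu, hadj⟩
      · left
        have : (⟨v, hv⟩ : ↥{w | w ≠ y}) = d' := by
          have := Finset.mem_coe.mp hmem
          rw [hd'] at this
          exact Finset.mem_singleton.mp this
        exact congrArg Subtype.val this
      · right
        have : u = d' := by
          have := Finset.mem_coe.mp hu
          rw [hd'] at this
          exact Finset.mem_singleton.mp this
        subst this
        exact hadj
    have hnady : ¬ G.Adj ↑d' y := by
      intro hady
      refine K1single G hγ ↑d' ?_
      intro v
      by_cases hvy : v = y
      · subst hvy; exact Or.inr hady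
      · exact hdm v hvy
    exact ⟨↑d', ↑d', Or.inl rfl, d'.2, d'.2, hnady, hnady, fun v hv => by
      rcases hdm v hv with h | h
      · exact Or.inl h
      · exact Or.inr (Or.inr (Or.inl h))⟩
  · -- card 2
    obtain ⟨a', b', hab', hd'⟩ := Finset.card_eq_two.mp hDc
    have hDset : (↑D : Set ↥{w | w ≠ y}) = {a', b'} := by
      rw [hd']; simp
    have hadj' : H.Adj a' b' := by
      apply pair_adj H hab'
      rw [← hDset]; exact hconn
    have hadjG : G.Adj ↑a' ↑b' := hadj'
    have hdm : ∀ v : V, v ≠ y → (v = ↑a' ∨ v = ↑b' ∨ G.Adj ↑a' v ∨ G.Adj ↑b' v) := by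
      intro v hv
      rcases hdom ⟨v, hv⟩ with hmem | ⟨u, hu, hadj⟩
      · rw [hDset] at hmem
        rcases hmem with h | h
        · exact Or.inl (congrArg Subtype.val h)
        · exact Or.inr (Or.inl (congrArg Subtype.val h))
      · rw [hDset] at hu
        rcases hu with rfl | rfl
        · exact Or.inr (Or.inr (Or.inl hadj))
        · exact Or.inr (Or.inr (Or.inr hadj))
    have hnady : ¬ G.Adj ↑a' y := by
      intro hady
      refine K1pair G hγ ↑a' ↑b' hadjG ?_
      intro v
      by_cases hvy : v = y
      · subst hvy; exact Or.inr (Or.inr (Or.inl hady))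
      · exact hdm v hvy
    have hnbdy : ¬ G.Adj ↑b' y := by
      intro hady
      refine K1pair G hγ ↑a' ↑b' hadjG ?_
      intro v
      by_cases hvy : v = y
      · subst hvy; exact Or.inr (Or.inr (Or.inr hady))
      · exact hdm v hvy
    exact ⟨↑a', ↑b', Or.inr hadjG, a'.2, b'.2, hnady, hnbdy, hdm⟩

end k3sec

section killsec
variable (G : SimpleGraph V) [Fintype V] [DecidableEq V]

lemma exists_third (x y : V) (hc : 3 ≤ Fintype.card V) : ∃ u : V, u ≠ x ∧ u ≠ y := by
  have hns : ¬ (Finset.univ : Finset V) ⊆ {x, y} := by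
    intro hsub
    have h2 : ({x, y} : Finset V).card ≤ 2 := Finset.card_insert_le _ _ |>.trans (by simp)
    have h3 := Finset.card_le_card hsub
    rw [Finset.card_univ] at h3
    omega
  obtain ⟨u, _, hu⟩ := Finset.not_subset.mp hns
  simp only [Finset.mem_insert, Finset.mem_singleton, not_or] at hu
  exact ⟨u, hu.1, hu.2⟩

lemma hasNbr (hγ : gammaC G = 3) (hκ : 2 ≤ kappa G)
    (hvc : ∀ y : V, gammaC (G.induce {w | w ≠ y}) < 3) (v : V) : ∃ u, G.Adj v u := by
  have hc : 3 ≤ Fintype.card V := cardV3 G hγ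
  have hone : 1 < Fintype.card V := by omega
  obtain ⟨y, hy⟩ := Fintype.exists_ne_of_one_lt_card hone v
  obtain ⟨d, e, hde, hdy, hey, _, _, hdom⟩ := K3 G hγ hκ hvc y
  have main : ∀ w : V, v = w → (w = d ∨ w = e) → ∃ u, G.Adj v u := by
    intro w hvw hw
    rcases hde with heq | hde'
    · -- d = e : then v dominates everything except y
      have hvd : d = v := by
        rcases hw with rfl | rfl
        · exact hvw.symm
        · exact heq.trans hvw.symm
      obtain ⟨u, huv, huy⟩ := exists_third v y hc
      rcases hdom u huy with h | h | h | h
      · exact absurd (h.trans hvd) huv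
      · exact absurd (h.trans (heq.symm.trans hvd)) huv
      · exact ⟨u, hvd ▸ h⟩
      · exact ⟨u, (heq.symm.trans hvd) ▸ h⟩
    · rcases hw with rfl | rfl
      · exact ⟨e, hvw ▸ hde'⟩
      · exact ⟨d, hvw ▸ hde'.symm⟩
  rcases hdom v (Ne.symm hy) with h | h | h | h
  · exact main d h (Or.inl rfl)
  · exact main e h (Or.inr rfl)
  · exact ⟨d, h.symm⟩
  · exact ⟨e, h.symm⟩

lemma Kill (hγ : gammaC G = 3) (hκ : 2 ≤ kappa G)
    (hvc : ∀ y : V, gammaC (G.induce {w | w ≠ y}) < 3) (x w₀ : V)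
    (hne : x ≠ w₀) (hnadj : ¬ G.Adj x w₀) (hsub : ∀ n, G.Adj x n → G.Adj w₀ n)
    (u : V) (hux : u ≠ x) (huw : u ≠ w₀) (hnxu : ¬ G.Adj x u) : False := by
  obtain ⟨d, e, hde, hdw, hew, hnadw, hnaew, hdom⟩ := K3 G hγ hκ hvc w₀
  have hdx : ¬ G.Adj d x := by
    intro h; exact hnadw ((hsub d h.symm).symm)
  have hex : ¬ G.Adj e x := by
    intro h; exact hnaew ((hsub e h.symm).symm)
  rcases hdom x hne with rfl | rfl | h | h
  · -- x = d
    rcases hde with heq | hde'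
    · -- e = x as well
      subst heq
      rcases hdom u huw with rfl | rfl | h | h
      · exact hux rfl
      · exact hux rfl
      · exact hnxu h
      · exact hnxu h
    · exact hex hde'.symm
  · -- x = e
    rcases hde with heq | hde'
    · subst heq
      rcases hdom u huw with rfl | rfl | h | h
      · exact hux rfl
      · exact hux rfl
      · exact hnxu h
      · exact hnxu h
    · exact hdx hde'
  · exact hdx h.symm.symm |>.elim
  · exact hex h.symm.symm |>.elim

end killsec

section k2sec
variable (G : SimpleGraph V) [Fintype V] [DecidableEq V]

lemma induce_le {G G' : SimpleGraph V} (h : G ≤ G') (s : Set V) :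
    G.induce s ≤ G'.induce s := by
  intro a b hab
  exact h hab

lemma adjSup (x y : V) (hxy : x ≠ y) (u v : V) :
    (G ⊔ SimpleGraph.fromEdgeSet {s(x, y)}).Adj u v ↔
      (G.Adj u v ∨ (u = x ∧ v = y) ∨ (u = y ∧ v = x)) := by
  rw [SimpleGraph.sup_adj, SimpleGraph.fromEdgeSet_adj]
  constructor
  · rintro (h | ⟨hmem, hne⟩)
    · exact Or.inl h
    · rw [Set.mem_singleton_iff, Sym2.eq_iff] at hmem
      exact Or.inr hmem
  · rintro (h | h | h)
    · exact Or.inl h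
    · refine Or.inr ⟨by rw [Set.mem_singleton_iff, Sym2.eq_iff]; exact Or.inl h, ?_⟩
      rcases h with ⟨rfl, rfl⟩; exact hxy
    · refine Or.inr ⟨by rw [Set.mem_singleton_iff, Sym2.eq_iff]; exact Or.inr h, ?_⟩
      rcases h with ⟨rfl, rfl⟩; exact hxy.symm

lemma K2aux (hγ : gammaC G = 3) (x y : V) (hxy : x ≠ y) (hnadj : ¬ G.Adj x y)
    (hnbr : ∃ a, G.Adj x a) (D : Finset V)
    (hD : IsConnDomSet (G ⊔ SimpleGraph.fromEdgeSet {s(x, y)}) ↑D)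
    (hcard : D.card ≤ 2) (hxD : x ∈ D) :
    (∀ v, v = x ∨ v = y ∨ G.Adj x v ∨ G.Adj y v) ∨
    (∃ a, G.Adj x a ∧ ¬ G.Adj y a ∧
      ∀ v, v ≠ y → (v = x ∨ v = a ∨ G.Adj x v ∨ G.Adj a v)) := by
  obtain ⟨hdom, hconn⟩ := hD
  obtain ⟨x0⟩ := hconn.nonempty
  have hDne : D.Nonempty := ⟨x0.1, Finset.mem_coe.mp x0.2⟩
  have h1 : 1 ≤ D.card := Finset.card_pos.mpr hDne
  interval_cases hDc : D.card
  · -- card 1 : D = {x}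
    have hDx : D = {x} := by
      obtain ⟨d, hd⟩ := Finset.card_eq_one.mp hDc
      rw [hd] at hxD ⊢
      rw [Finset.mem_singleton.mp hxD]
    subst hDx
    have hdomx : ∀ v : V, v ≠ y → (v = x ∨ G.Adj x v) := by
      intro v hvy
      rcases hdom v with hm | ⟨u, hu, hadj⟩
      · exact Or.inl (by simpa using hm)
      · have hux : u = x := by simpa using hu
        rw [hux] at hadj
        rcases (adjSup G x y hxy x v).mp hadj with h | ⟨_, rfl⟩ | ⟨h, _⟩
        · exact Or.inr h
        · exact absurd rfl hvy
        · exact absurd h hxy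
    obtain ⟨a, hxa⟩ := hnbr
    right
    refine ⟨a, hxa, ?_, ?_⟩
    · intro hya
      refine K1pair G hγ x a hxa ?_
      intro v
      by_cases hvy : v = y
      · subst hvy; exact Or.inr (Or.inr (Or.inr hya.symm))
      · rcases hdomx v hvy with h | h
        · exact Or.inl h
        · exact Or.inr (Or.inr (Or.inl h))
    · intro v hvy
      rcases hdomx v hvy with h | h
      · exact Or.inl h
      · exact Or.inr (Or.inr (Or.inl h))
  · -- card 2
    have hDxc : ∃ c, D = {x, c} ∧ c ≠ x := by
      obtain ⟨a, b, hab, hd⟩ := Finset.card_eq_two.mp hDc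
      rw [hd] at hxD
      rcases Finset.mem_insert.mp hxD with rfl | hxb
      · exact ⟨b, hd, hab.symm⟩
      · have hxb' : x = b := Finset.mem_singleton.mp hxb
        subst hxb'
        exact ⟨a, by rw [hd, Finset.pair_comm], hab⟩
    obtain ⟨c, hDeq, hcx⟩ := hDxc
    subst hDeq
    have hDset : (↑({x, c} : Finset V) : Set V) = {x, c} := by simp
    have hadjG' : (G ⊔ SimpleGraph.fromEdgeSet {s(x, y)}).Adj x c := by
      apply pair_adj _ hcx.symm
      rw [← hDset]; exact hconn
    by_cases hcy : c = y
    · -- D = {x, y} : type (a)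
      left
      intro v
      rcases hdom v with hm | ⟨u, hu, hadj⟩
      · have hv : v = x ∨ v = c := by simpa using hm
        rcases hv with rfl | rfl
        · exact Or.inl rfl
        · exact Or.inr (Or.inl hcy)
      · have hu' : u = x ∨ u = c := by simpa using hu
        rcases hu' with heq | heq
        · rw [heq] at hadj
          rcases (adjSup G x y hxy x v).mp hadj with h | ⟨_, rfl⟩ | ⟨h, _⟩
          · exact Or.inr (Or.inr (Or.inl h))
          · exact Or.inr (Or.inl rfl)
          · exact absurd h hxy
        · rw [heq, hcy] at hadj
          rcases (adjSup G x y hxy y v).mp hadj with h | ⟨h, _⟩ | ⟨_, rfl⟩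
          · exact Or.inr (Or.inr (Or.inr h))
          · exact absurd h.symm hxy
          · exact Or.inl rfl
    · -- c ≠ y : type (b) with a := c
      have hadjxc : G.Adj x c := by
        rcases (adjSup G x y hxy x c).mp hadjG' with h | ⟨_, h⟩ | ⟨h, _⟩
        · exact h
        · exact absurd h hcy
        · exact absurd h hxy
      have hdomxc : ∀ v, v ≠ y → (v = x ∨ v = c ∨ G.Adj x v ∨ G.Adj c v) := by
        intro v hvy
        rcases hdom v with hm | ⟨u, hu, hadj⟩
        · have hv : v = x ∨ v = c := by simpa using hm
          tauto
        · have hu' : u = x ∨ u = c := by simpa using hu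
          rcases hu' with heq | heq
          · rw [heq] at hadj
            rcases (adjSup G x y hxy x v).mp hadj with h | ⟨_, rfl⟩ | ⟨h, _⟩
            · tauto
            · exact absurd rfl hvy
            · exact absurd h hxy
          · rw [heq] at hadj
            rcases (adjSup G x y hxy c v).mp hadj with h | ⟨h, _⟩ | ⟨h, _⟩
            · tauto
            · exact absurd h hcx
            · exact absurd h hcy
      right
      refine ⟨c, hadjxc, ?_, hdomxc⟩
      intro hyc
      refine K1pair G hγ x c hadjxc ?_
      intro v
      by_cases hvy : v = y
      · subst hvy; exact Or.inr (Or.inr (Or.inr hyc.symm))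
      · exact hdomxc v hvy

lemma K2 (hγ : gammaC G = 3) (hκ : 2 ≤ kappa G)
    (hvc : ∀ y : V, gammaC (G.induce {w | w ≠ y}) < 3)
    (hec : ∀ u v : V, u ≠ v → ¬ G.Adj u v →
      gammaC (G ⊔ SimpleGraph.fromEdgeSet {s(u, v)}) < 3)
    (x y : V) (hxy : x ≠ y) (hnadj : ¬ G.Adj x y) :
    (∀ v, v = x ∨ v = y ∨ G.Adj x v ∨ G.Adj y v) ∨
    (∃ a, G.Adj x a ∧ ¬ G.Adj y a ∧
      ∀ v, v ≠ y → (v = x ∨ v = a ∨ G.Adj x v ∨ G.Adj a v)) ∨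
    (∃ b, G.Adj y b ∧ ¬ G.Adj x b ∧
      ∀ v, v ≠ x → (v = y ∨ v = b ∨ G.Adj y v ∨ G.Adj b v)) := by
  classical
  set G' := G ⊔ SimpleGraph.fromEdgeSet {s(x, y)} with hG'def
  have hle : G ≤ G' := le_sup_left
  -- the CDS-card set of G' is nonempty
  have hne : {k | ∃ D : Finset V, D.card = k ∧ IsConnDomSet G' ↑D}.Nonempty := by
    obtain ⟨D₃, _, hdom₃, hconn₃⟩ := exCDS3 G hγ
    refine ⟨D₃.card, D₃, rfl, ?_, ?_⟩
    · intro v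
      rcases hdom₃ v with hm | ⟨u, hu, hadj⟩
      · exact Or.inl hm
      · exact Or.inr ⟨u, hu, hle hadj⟩
    · exact hconn₃.mono (induce_le hle _)
  obtain ⟨D, hcard, hD⟩ := small_cds G' hne (hec x y hxy hnadj)
  by_cases hxD : x ∈ D
  · rcases K2aux G hγ x y hxy hnadj (hasNbr G hγ hκ hvc x) D hD hcard hxD with h | h
    · exact Or.inl h
    · exact Or.inr (Or.inl h)
  by_cases hyD : y ∈ D
  · have hswap : G' = G ⊔ SimpleGraph.fromEdgeSet {s(y, x)} := by
      rw [hG'def, Sym2.eq_swap]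
    rw [hswap] at hD
    rcases K2aux G hγ y x hxy.symm (fun h => hnadj h.symm) (hasNbr G hγ hκ hvc y)
        D hD hcard hyD with h | h
    · left
      intro v
      rcases h v with h' | h' | h' | h'
      · exact Or.inr (Or.inl h')
      · exact Or.inl h'
      · exact Or.inr (Or.inr (Or.inr h'))
      · exact Or.inr (Or.inr (Or.inl h'))
    · exact Or.inr (Or.inr h)
  · -- neither : D is a CDS of G, contradiction
    exfalso
    obtain ⟨hdom, hconn⟩ := hD
    have hcds : IsConnDomSet G ↑D := by
      constructor
      · intro v
        rcases hdom v with hm | ⟨u, hu, hadj⟩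
        · exact Or.inl hm
        · rcases (adjSup G x y hxy u v).mp hadj with h | ⟨h, _⟩ | ⟨h, _⟩
          · exact Or.inr ⟨u, hu, h⟩
          · exact absurd (h ▸ (Finset.mem_coe.mp hu)) hxD
          · exact absurd (h ▸ (Finset.mem_coe.mp hu)) hyD
      · have hEq : G.induce (↑D : Set V) = G'.induce ↑D := by
          ext a b
          constructor
          · intro hab
            exact hle hab
          · intro hab
            rcases (adjSup G x y hxy ↑a ↑b).mp hab with h | ⟨h, _⟩ | ⟨h, _⟩
            · exact h
            · exact absurd (h ▸ (Finset.mem_coe.mp a.2)) hxD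
            · exact absurd (h ▸ (Finset.mem_coe.mp a.2)) hyD
        rw [hEq]
        exact hconn
    have := noCDS2 G hγ D hcds
    omega

end k2sec

section mainsec
variable (G : SimpleGraph V) [Fintype V] [DecidableEq V]

def GoodWit (G : SimpleGraph V) (I : Finset V) (z w : V) : Prop :=
  ∃ s : V, s ∉ I ∧ ¬ G.Adj s w ∧ (∀ v ∈ I, v ≠ w → G.Adj s v) ∧ (w ≠ z → G.Adj z s)

lemma noBigIndep (hγ : gammaC G = 3) (hκ : 2 ≤ kappa G)
    (hvc : ∀ y : V, gammaC (G.induce {w | w ≠ y}) < 3)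
    (hec : ∀ u v : V, u ≠ v → ¬ G.Adj u v →
      gammaC (G ⊔ SimpleGraph.fromEdgeSet {s(u, v)}) < 3)
    (I : Finset V) (hind : (↑I : Set V).Pairwise fun u v => ¬ G.Adj u v)
    (hIcard : I.card = minDeg G + 2) : False := by
  classical
  set δ := minDeg G with hδdef
  have hVne : Nonempty V := by
    have := cardV3 G hγ
    exact Fintype.card_pos_iff.mp (by omega)
  obtain ⟨v₀⟩ := hVne
  have hdegne : {k | ∃ v : V, (G.neighborSet v).ncard = k}.Nonempty :=
    ⟨(G.neighborSet v₀).ncard, v₀, rfl⟩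
  obtain ⟨z, hz⟩ : ∃ z : V, (G.neighborSet z).ncard = δ := Nat.sInf_mem hdegne
  have hδ1 : 1 ≤ δ := by
    obtain ⟨u, hu⟩ := hasNbr G hγ hκ hvc z
    have hne : (G.neighborSet z).Nonempty := ⟨u, hu⟩
    have hpos : 0 < (G.neighborSet z).ncard :=
      (Set.ncard_pos (Set.toFinite _)).mpr hne
    omega
  have hI3 : 3 ≤ I.card := by omega
  have hnadjI : ∀ u ∈ I, ∀ v ∈ I, u ≠ v → ¬ G.Adj u v := fun u hu v hv huv =>
    hind hu hv huv
  have third_in : ∀ u w : V, ∃ v ∈ I, v ≠ u ∧ v ≠ w := by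
    intro u w
    have hns : ¬ I ⊆ {u, w} := by
      intro hsub
      have h1 := Finset.card_le_card hsub
      have h2 : ({u, w} : Finset V).card ≤ 2 :=
        Finset.card_insert_le _ _ |>.trans (by simp)
      omega
    obtain ⟨v, hvI, hv⟩ := Finset.not_subset.mp hns
    simp only [Finset.mem_insert, Finset.mem_singleton, not_or] at hv
    exact ⟨v, hvI, hv.1, hv.2⟩
  set P := I.filter (fun w => ¬ G.Adj z w) with hP
  set NI := I.filter (fun w => G.Adj z w) with hNI
  have hPmem : ∀ w, w ∈ P ↔ (w ∈ I ∧ ¬ G.Adj z w) := by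
    intro w; rw [hP]; exact Finset.mem_filter
  have hNImem : ∀ w, w ∈ NI ↔ (w ∈ I ∧ G.Adj z w) := by
    intro w; rw [hNI]; exact Finset.mem_filter
  have hdisjPNI : Disjoint NI P := by
    rw [Finset.disjoint_left]
    intro a ha hb
    exact ((hPmem a).mp hb).2 ((hNImem a).mp ha).2
  have hunionPNI : NI ∪ P = I := by
    ext a
    constructor
    · intro ha
      rcases Finset.mem_union.mp ha with h | h
      · exact ((hNImem a).mp h).1
      · exact ((hPmem a).mp h).1
    · intro ha
      by_cases hadj : G.Adj z a
      · exact Finset.mem_union.mpr (Or.inl ((hNImem a).mpr ⟨ha, hadj⟩))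
      · exact Finset.mem_union.mpr (Or.inr ((hPmem a).mpr ⟨ha, hadj⟩))
  have hPNI : NI.card + P.card = I.card := by
    rw [← Finset.card_union_of_disjoint hdisjPNI, hunionPNI]
  have hNIle : NI.card ≤ δ := by
    have hsub : (↑NI : Set V) ⊆ G.neighborSet z := by
      intro v hv
      exact ((hNImem v).mp (Finset.mem_coe.mp hv)).2
    calc NI.card = (↑NI : Set V).ncard := (Set.ncard_coe_finset NI).symm
      _ ≤ (G.neighborSet z).ncard := Set.ncard_le_ncard hsub (Set.toFinite _)
      _ = δ := hz
  -- key pairwise claim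
  have pair_good : ∀ u ∈ P, ∀ w ∈ P, u ≠ w → (GoodWit G I z u ∨ GoodWit G I z w) := by
    intro u hu w hw huw
    have huI := ((hPmem u).mp hu).1
    have hwI := ((hPmem w).mp hw).1
    have hnadjuw : ¬ G.Adj u w := hnadjI u huI w hwI huw
    have mk : ∀ x, x ∈ P → ∀ y, y ∈ P → x ≠ y →
        (∃ a, G.Adj x a ∧ ¬ G.Adj y a ∧
          ∀ v, v ≠ y → (v = x ∨ v = a ∨ G.Adj x v ∨ G.Adj a v)) → GoodWit G I z y := by
      rintro x hx y hy hxy ⟨a, hxa, hnya, hdom⟩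
      have hxI := ((hPmem x).mp hx).1
      have hxz := ((hPmem x).mp hx).2
      have hyI := ((hPmem y).mp hy).1
      have hyz := ((hPmem y).mp hy).2
      have haI : a ∉ I := by
        intro haI
        exact hnadjI x hxI a haI hxa.ne hxa
      have hallI : ∀ v ∈ I, v ≠ y → G.Adj a v := by
        intro v hvI hvy
        by_cases hvx : v = x
        · rw [hvx]; exact hxa.symm
        · rcases hdom v hvy with h | h | h | h
          · exact absurd h hvx
          · exact absurd (h ▸ hvI) haI
          · exact absurd h (hnadjI x hxI v hvI (Ne.symm hvx))
          · exact h
      refine ⟨a, haI, fun hadj => hnya hadj.symm, hallI, ?_⟩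
      intro hyzne
      by_cases hzx : z = x
      · rw [hzx]; exact hxa
      · have hza : z ≠ a := by
          intro hza'
          have hsub : (↑(I.erase y) : Set V) ⊆ G.neighborSet a := by
            intro v hv
            rw [Finset.coe_erase] at hv
            exact hallI v hv.1 (by simpa using hv.2)
          have h1 : (↑(I.erase y) : Set V).ncard = I.card - 1 := by
            rw [Set.ncard_coe_finset, Finset.card_erase_of_mem hyI]
          have h2 := Set.ncard_le_ncard hsub (Set.toFinite _)
          rw [← hza'] at h2
          omega
        rcases hdom z (Ne.symm hyzne) with h | h | h | h
        · exact absurd h hzx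
        · exact absurd h hza
        · exact absurd h.symm hxz
        · exact h.symm
    rcases K2 G hγ hκ hvc hec u w huw hnadjuw with h | h | h
    · obtain ⟨v, hvI, hvu, hvw⟩ := third_in u w
      rcases h v with h' | h' | h' | h'
      · exact absurd h' hvu
      · exact absurd h' hvw
      · exact absurd h' (hnadjI u huI v hvI (Ne.symm hvu))
      · exact absurd h' (hnadjI w hwI v hvI (Ne.symm hvw))
    · exact Or.inr (mk u hu w hw huw h)
    · exact Or.inl (mk w hw u hu huw.symm h)
  -- at most one non-good vertex of P
  have one_bad : ∀ u ∈ P, ∀ w ∈ P, u ≠ w →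
      ¬ GoodWit G I z u → ¬ GoodWit G I z w → False := by
    intro u hu w hw huw hbu hbw
    rcases pair_good u hu w hw huw with h | h
    · exact hbu h
    · exact hbw h
  -- the witnesses
  set T := (P.erase z).filter (fun w => GoodWit G I z w) with hT
  have hTmem : ∀ w, w ∈ T → w ∈ I ∧ ¬ G.Adj z w ∧ w ≠ z ∧ GoodWit G I z w := by
    intro w hw
    rw [hT, Finset.mem_filter, Finset.mem_erase] at hw
    exact ⟨((hPmem w).mp hw.1.2).1, ((hPmem w).mp hw.1.2).2, hw.1.1, hw.2⟩
  have hfex : ∀ w : V, w ∈ T →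
      ∃ s : V, s ∉ I ∧ ¬ G.Adj s w ∧ (∀ v ∈ I, v ≠ w → G.Adj s v) ∧ G.Adj z s := by
    intro w hw
    obtain ⟨hwI, hwz, hwnez, s, hs1, hs2, hs3, hs4⟩ := hTmem w hw
    exact ⟨s, hs1, hs2, hs3, hs4 hwnez⟩
  choose f hf1 hf2 hf3 hf4 using hfex
  set S := T.attach.image (fun w => f w.1 w.2) with hS
  have hScard : S.card = T.card := by
    rw [hS, Finset.card_image_of_injOn, Finset.card_attach]
    intro w _ w' _ heq
    by_contra hne
    have hcne : (w.1 : V) ≠ w'.1 := fun hc => hne (Subtype.ext hc)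
    have heq' : f w.1 w.2 = f w'.1 w'.2 := heq
    have hadjc := hf3 w.1 w.2 w'.1 (hTmem w'.1 w'.2).1 (Ne.symm hcne)
    rw [heq'] at hadjc
    exact hf2 w'.1 w'.2 hadjc
  have hSprop : ∀ s ∈ S, G.Adj z s ∧ s ∉ I ∧ ∃ w, ∃ hw : w ∈ T, s = f w hw := by
    intro s hs
    rw [hS] at hs
    obtain ⟨w, hw, rfl⟩ := Finset.mem_image.mp hs
    exact ⟨hf4 w.1 w.2, hf1 w.1 w.2, w.1, w.2, rfl⟩
  have hSNIdisj : Disjoint S NI := by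
    rw [Finset.disjoint_left]
    intro s hsS hsNI
    exact (hSprop s hsS).2.1 ((hNImem s).mp hsNI).1
  have hSsubN : (↑S : Set V) ⊆ G.neighborSet z := by
    intro s hs
    exact (hSprop s (Finset.mem_coe.mp hs)).1
  have hUnion : S.card + NI.card ≤ δ := by
    have hsub : (↑(S ∪ NI) : Set V) ⊆ G.neighborSet z := by
      intro s hs
      rcases Finset.mem_union.mp (Finset.mem_coe.mp hs) with h | h
      · exact (hSprop s h).1
      · exact ((hNImem s).mp h).2
    calc S.card + NI.card = (S ∪ NI).card := (Finset.card_union_of_disjoint hSNIdisj).symm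
      _ = (↑(S ∪ NI) : Set V).ncard := (Set.ncard_coe_finset _).symm
      _ ≤ (G.neighborSet z).ncard := Set.ncard_le_ncard hsub (Set.toFinite _)
      _ = δ := hz
  by_cases hzI : z ∈ I
  · -- z belongs to I
    have hzP : z ∈ P := (hPmem z).mpr ⟨hzI, G.irrefl⟩
    have hNI0 : NI.card = 0 := by
      rw [Finset.card_eq_zero, Finset.eq_empty_iff_forall_notMem]
      intro w hw
      obtain ⟨hwI, hwadj⟩ := (hNImem w).mp hw
      by_cases hwzeq : w = z
      · rw [hwzeq] at hwadj; exact G.irrefl hwadj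
      · exact hnadjI z hzI w hwI (Ne.symm hwzeq) hwadj
    have hPcard : P.card = δ + 2 := by omega
    have hQcard : (P.erase z).card = δ + 1 := by
      rw [Finset.card_erase_of_mem hzP, hPcard]
      omega
    by_cases hall : ∀ w ∈ P.erase z, GoodWit G I z w
    · have hTP : T = P.erase z := by
        rw [hT]
        exact Finset.filter_true_of_mem hall
      have : S.card = δ + 1 := by rw [hScard, hTP, hQcard]
      omega
    · push_neg at hall
      obtain ⟨w₀, hw₀Q, hw₀bad⟩ := hall
      have hw₀P : w₀ ∈ P := Finset.mem_of_mem_erase hw₀Q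
      have hw₀I : w₀ ∈ I := ((hPmem w₀).mp hw₀P).1
      have hw₀z : w₀ ≠ z := Finset.ne_of_mem_erase hw₀Q
      have hTsub : (P.erase z).erase w₀ ⊆ T := by
        intro w hw
        have hw1 : w ∈ P.erase z := Finset.mem_of_mem_erase hw
        have hwP : w ∈ P := Finset.mem_of_mem_erase hw1
        have hwne : w ≠ w₀ := Finset.ne_of_mem_erase hw
        have hgood : GoodWit G I z w := by
          by_contra hbad
          exact one_bad w₀ hw₀P w hwP (Ne.symm hwne) hw₀bad hbad
        rw [hT, Finset.mem_filter]
        exact ⟨hw1, hgood⟩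
      have hTcard : δ ≤ T.card := by
        have h1 := Finset.card_le_card hTsub
        have h2 : ((P.erase z).erase w₀).card = δ := by
          rw [Finset.card_erase_of_mem hw₀Q, hQcard]
          omega
        omega
      have hSeq : (↑S : Set V) = G.neighborSet z :=
        Set.eq_of_subset_of_ncard_le hSsubN
          (by rw [hz, Set.ncard_coe_finset]; omega) (Set.toFinite _)
      have hsubN : ∀ n, G.Adj z n → G.Adj w₀ n := by
        intro n hzn
        have hnS : n ∈ (↑S : Set V) := by
          rw [hSeq]
          exact hzn
        obtain ⟨_, _, w, hwT, rfl⟩ := hSprop n (Finset.mem_coe.mp hnS)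
        have hwGood := (hTmem w hwT).2.2.2
        have hwne : w ≠ w₀ := by
          intro heq
          exact hw₀bad (heq ▸ hwGood)
        exact (hf3 w hwT w₀ hw₀I (Ne.symm hwne)).symm
      obtain ⟨u, huI, huz, huw₀⟩ := third_in z w₀
      exact Kill G hγ hκ hvc z w₀ (Ne.symm hw₀z) ((hPmem w₀).mp hw₀P).2 hsubN u
        huz huw₀ (hnadjI z hzI u huI (Ne.symm huz))
  · -- z ∉ I
    have hzP : z ∉ P := fun h => hzI ((hPmem z).mp h).1
    have hQP : P.erase z = P := Finset.erase_eq_of_notMem hzP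
    have hT1 : P.card ≤ T.card + 1 := by
      by_cases hex : ∃ w₀ ∈ P, ¬ GoodWit G I z w₀
      · obtain ⟨w₀, hw₀P, hw₀bad⟩ := hex
        have hsub : P.erase w₀ ⊆ T := by
          intro w hw
          have hwP := Finset.mem_of_mem_erase hw
          have hwne := Finset.ne_of_mem_erase hw
          have hgood : GoodWit G I z w := by
            by_contra hbad
            exact one_bad w₀ hw₀P w hwP (Ne.symm hwne) hw₀bad hbad
          rw [hT, hQP, Finset.mem_filter]
          exact ⟨hwP, hgood⟩
        have h1 := Finset.card_le_card hsub
        have h2 : (P.erase w₀).card = P.card - 1 := Finset.card_erase_of_mem hw₀P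
        have h3 : 1 ≤ P.card := Finset.card_pos.mpr ⟨w₀, hw₀P⟩
        omega
      · push_neg at hex
        have hTP : T = P := by
          rw [hT, hQP]
          exact Finset.filter_true_of_mem hex
        have : T.card = P.card := by rw [hTP]
        omega
    omega

end mainsec


/-- every maximal `3`-`γc`-vertex critical graph satisfies `α(G) ≤ δ(G) + 1`. -/
theorem stmt_0 (G : SimpleGraph V) [Fintype V] [DecidableEq V]
    (h : MaximalVertexCritical3 G) : alpha G ≤ minDeg G + 1 := by
  classical
  obtain ⟨⟨hγ, hec⟩, hκ, hγ2, hvc⟩ := h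
  rw [alpha]
  apply csSup_le
  · exact ⟨0, ∅, by simp, by simp⟩
  · intro k hk
    by_contra hgt
    push_neg at hgt
    obtain ⟨I, hIcard, hind⟩ := hk
    obtain ⟨J, hJsub, hJcard⟩ := Finset.exists_subset_card_eq (s := I) (n := minDeg G + 2) (by omega)
    exact noBigIndep G hγ hκ hvc hec J (hind.mono (Finset.coe_subset.mpr hJsub)) hJcard
end

section
/- Let G be a maximal 3-γc-vertex critical graph with δ(G) ≥ 4 and α(G) = δ(G) + 1, let x be a vertex of degree δ(G), and suppose a maximum independent set I of G is ordered as x₁, x₂, …, x_{δ+1} and there is a path y₁, y₂, …, y_δ in G − I such that {x_i, y_i} is a connected dominating set of G − x_{i+1} for each 1 ≤ i ≤ δ. Then for all 2 ≤ i ≠ j ≤ δ + 1 with x_i ≠ x and x_j ≠ x, if x is adjacent to neither x_i nor x_j, then y_{i−1} is adjacent to y_{j−1}. -/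
open Finset

variable {V : Type*}

/-- `D` is a connected dominating set of the vertex-deleted graph `G - w`. -/
def IsConnDomSetAvoiding (G : SimpleGraph V) (D : Set V) (w : V) : Prop :=
  w ∉ D ∧ (∀ v : V, v ≠ w → v ∈ D ∨ ∃ u ∈ D, G.Adj u v) ∧ (G.induce D).Connected


section Helpers

private lemma induce_pair_adj {W : Type*} {H : SimpleGraph W} {a b : W}
    (h : (H.induce {a, b}).Connected) (hne : a ≠ b) : H.Adj a b := by
  have ha : a ∈ ({a, b} : Set W) := by simp
  have hb : b ∈ ({a, b} : Set W) := by simp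
  obtain ⟨p⟩ := h.preconnected ⟨a, ha⟩ ⟨b, hb⟩
  have key : ∀ (u v : ({a, b} : Set W)) (_ : (H.induce {a, b}).Walk u v),
      (u : W) ≠ (v : W) → H.Adj a b := by
    intro u v p
    cases p with
    | nil => intro hne'; exact absurd rfl hne'
    | @cons _ c _ h' p' =>
      intro _
      have hadj : H.Adj (u : W) (c : W) := h'
      have hu := u.2
      have hc := c.2
      simp only [Set.mem_insert_iff, Set.mem_singleton_iff] at hu hc
      rcases hu with hu | hu <;> rcases hc with hc | hc <;> rw [hu, hc] at hadj
      · exact absurd hadj (H.irrefl)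
      · exact hadj
      · exact hadj.symm
      · exact absurd hadj (H.irrefl)
  exact key _ _ p hne

private lemma pair_connected {W : Type*} (H : SimpleGraph W) {a b : W} (h : H.Adj a b) :
    (H.induce {a, b}).Connected := by
  rw [SimpleGraph.connected_iff]
  have ha : a ∈ ({a, b} : Set W) := by simp
  have hb : b ∈ ({a, b} : Set W) := by simp
  refine ⟨?_, ⟨⟨a, ha⟩⟩⟩
  rintro ⟨u, hu⟩ ⟨v, hv⟩
  simp only [Set.mem_insert_iff, Set.mem_singleton_iff] at hu hv
  have hab : (H.induce {a, b}).Adj ⟨a, ha⟩ ⟨b, hb⟩ := h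
  rcases hu with rfl | rfl <;> rcases hv with rfl | rfl
  · rfl
  · exact hab.reachable
  · exact hab.symm.reachable
  · rfl

private lemma singleton_connected {W : Type*} (H : SimpleGraph W) (a : W) :
    (H.induce {a}).Connected := by
  rw [SimpleGraph.connected_iff]
  refine ⟨?_, ⟨⟨a, rfl⟩⟩⟩
  rintro ⟨u, hu⟩ ⟨v, hv⟩
  simp only [Set.mem_singleton_iff] at hu hv
  subst hu; subst hv; rfl

private lemma no_small_cds {W : Type*} [Fintype W] {H : SimpleGraph W}
    (h3 : gammaC H = 3) (D : Finset W) (hc : D.card ≤ 2) (hD : IsConnDomSet H ↑D) : False := by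
  have hle : gammaC H ≤ D.card := Nat.sInf_le ⟨D, rfl, hD⟩
  omega

private lemma cds_extract {W : Type*} [Fintype W] {H : SimpleGraph W}
    (hconn : H.Connected) (hlt : gammaC H < 3) :
    ∃ D : Finset W, D.card ≤ 2 ∧
      (∀ v : W, v ∈ (↑D : Set W) ∨ ∃ u ∈ (↑D : Set W), H.Adj u v) ∧
      (H.induce ↑D).Connected := by
  have hmem : (Finset.univ : Finset W).card ∈
      {k | ∃ D : Finset W, D.card = k ∧ IsConnDomSet H ↑D} := by
    refine ⟨Finset.univ, rfl, fun v => Or.inl (by simp), ?_⟩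
    rw [Finset.coe_univ]
    exact (SimpleGraph.induceUnivIso H).connected_iff.mpr hconn
  obtain ⟨D, hcard, hdom, hconn'⟩ := Nat.sInf_mem (Set.nonempty_of_mem hmem)
  refine ⟨D, ?_, hdom, hconn'⟩
  have : gammaC H < 3 := hlt
  unfold gammaC at this
  omega

private lemma conn_of_kappa {W : Type*} [Fintype W] {H : SimpleGraph W}
    (h2 : 2 ≤ kappa H) : H.Connected := by
  by_contra hc
  have h0 : (0 : ℕ) ∈ {k | ∃ S : Finset W, S.card = k ∧
      (¬ (H.induce (↑S : Set W)ᶜ).Connected ∨ ((↑S : Set W)ᶜ).Subsingleton)} := by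
    refine ⟨∅, Finset.card_empty, Or.inl ?_⟩
    rw [Finset.coe_empty, Set.compl_empty]
    exact fun hcon => hc ((SimpleGraph.induceUnivIso H).connected_iff.mp hcon)
  have hle := Nat.sInf_le h0
  unfold kappa at h2
  omega

private lemma conn_del_of_kappa {W : Type*} [Fintype W] {H : SimpleGraph W}
    (h2 : 2 ≤ kappa H) (v : W) : (H.induce {w | w ≠ v}).Connected := by
  by_contra hc
  have h1 : (1 : ℕ) ∈ {k | ∃ S : Finset W, S.card = k ∧
      (¬ (H.induce (↑S : Set W)ᶜ).Connected ∨ ((↑S : Set W)ᶜ).Subsingleton)} := by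
    refine ⟨{v}, Finset.card_singleton v, Or.inl ?_⟩
    have hset : ((↑({v} : Finset W) : Set W))ᶜ = {w | w ≠ v} := by
      ext w; simp
    rw [hset]
    exact hc
  have hle := Nat.sInf_le h1
  unfold kappa at h2
  omega

private lemma vc_extract {W : Type*} [Fintype W] [DecidableEq W] {H : SimpleGraph W}
    (hk : 2 ≤ kappa H) (hvc3 : ∀ v : W, gammaC (H.induce {w | w ≠ v}) < 3) (v0 : W) :
    ∃ Dv : Finset W, Dv.card ≤ 2 ∧ (∀ u ∈ Dv, u ≠ v0) ∧
      (∀ u : W, u ≠ v0 → u ∈ Dv ∨ ∃ z ∈ Dv, H.Adj z u) ∧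
      (H.induce ↑Dv).Connected := by
  classical
  have hconn' := conn_del_of_kappa hk v0
  obtain ⟨D', hc', hdom', hcn'⟩ := cds_extract hconn' (hvc3 v0)
  refine ⟨D'.image Subtype.val, (Finset.card_image_le).trans hc', ?_, ?_, ?_⟩
  · intro u hu
    obtain ⟨b, _, hb⟩ := Finset.mem_image.mp hu
    exact hb ▸ b.2
  · intro u hu
    rcases hdom' ⟨u, hu⟩ with hmem | ⟨z, hz, hadj⟩
    · left
      exact Finset.mem_image.mpr ⟨⟨u, hu⟩, Finset.mem_coe.mp hmem, rfl⟩
    · right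
      exact ⟨z.val, Finset.mem_image.mpr ⟨z, Finset.mem_coe.mp hz, rfl⟩, hadj⟩
  · have hD'ne : D'.Nonempty := by
      rcases Finset.eq_empty_or_nonempty D' with he | hne
      · exfalso
        rw [he] at hcn'
        obtain ⟨⟨z, hz⟩⟩ := hcn'.nonempty
        simp at hz
      · exact hne
    have hc2 : D'.card = 1 ∨ D'.card = 2 := by
      have := Finset.card_pos.mpr hD'ne
      omega
    rcases hc2 with h1 | h2
    · obtain ⟨b, hb⟩ := Finset.card_eq_one.mp h1
      rw [hb, Finset.image_singleton, Finset.coe_singleton]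
      exact singleton_connected H _
    · obtain ⟨b1, b2, hbne, hb⟩ := Finset.card_eq_two.mp h2
      have hcn'' : ((H.induce {w | w ≠ v0}).induce {b1, b2}).Connected := by
        rw [hb, Finset.coe_insert, Finset.coe_singleton] at hcn'
        exact hcn'
      have h' := induce_pair_adj (H := H.induce {w | w ≠ v0}) hcn'' hbne
      have hadj : H.Adj b1.val b2.val := h'
      have hvne : b1.val ≠ b2.val := fun he => hbne (Subtype.ext he)
      rw [hb, Finset.image_insert, Finset.image_singleton, Finset.coe_insert,
        Finset.coe_singleton]
      exact pair_connected H hadj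

end Helpers

/-- Let `G` be a maximal `3`-`γc`-vertex critical graph with `δ ≥ 4` and
`α = δ + 1`, let `x` be a vertex of degree `δ`, and suppose a maximum independent set
`I` is ordered as `x₁, …, x_{δ+1}` (here `xs 1, …, xs (δ+1)`) and there is a path
`y₁, …, y_δ` (here `ys 1, …, ys δ`) in `G - I` such that `{xᵢ, yᵢ}` is a connected
dominating set of `G - x_{i+1}` for `1 ≤ i ≤ δ`.  Then for all `2 ≤ i ≠ j ≤ δ + 1`
with `xs i ≠ x` and `xs j ≠ x`, if `x` is adjacent to neither `xs i` nor `xs j`, then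
`ys (i-1)` is adjacent to `ys (j-1)`. -/
theorem stmt_1 (G : SimpleGraph V) [Fintype V] [DecidableEq V]
    (h : MaximalVertexCritical3 G)
    (hδ : 4 ≤ minDeg G) (hα : alpha G = minDeg G + 1)
    (x : V) (hx : (G.neighborSet x).ncard = minDeg G)
    (I : Finset V) (hIind : (↑I : Set V).Pairwise fun u v => ¬ G.Adj u v)
    (hIcard : I.card = alpha G)
    (xs ys : ℕ → V)
    (hxsinj : Set.InjOn xs (Set.Icc 1 (minDeg G + 1)))
    (hxsI : ∀ i ∈ Set.Icc 1 (minDeg G + 1), xs i ∈ I)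
    (hysinj : Set.InjOn ys (Set.Icc 1 (minDeg G)))
    (hysI : ∀ i ∈ Set.Icc 1 (minDeg G), ys i ∉ I)
    (hpath : ∀ i ∈ Set.Icc 1 (minDeg G - 1), G.Adj (ys i) (ys (i + 1)))
    (hdom : ∀ i ∈ Set.Icc 1 (minDeg G),
      IsConnDomSetAvoiding G {xs i, ys i} (xs (i + 1)))
    (i j : ℕ) (hi : i ∈ Set.Icc 2 (minDeg G + 1)) (hj : j ∈ Set.Icc 2 (minDeg G + 1))
    (hij : i ≠ j) (hxi : xs i ≠ x) (hxj : xs j ≠ x)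
    (hadji : ¬ G.Adj x (xs i)) (hadjj : ¬ G.Adj x (xs j)) :
    G.Adj (ys (i - 1)) (ys (j - 1)) := by
  classical
  obtain ⟨⟨hg3, hec⟩, hkappa, hg3', hvc⟩ := h
  haveI : Nonempty V := ⟨x⟩
  set d := minDeg G with hd
  obtain ⟨hi2, hiu⟩ := Set.mem_Icc.mp hi
  obtain ⟨hj2, hju⟩ := Set.mem_Icc.mp hj
  have hiI : i ∈ Set.Icc 1 (d + 1) := Set.mem_Icc.mpr ⟨by omega, hiu⟩
  have hjI : j ∈ Set.Icc 1 (d + 1) := Set.mem_Icc.mpr ⟨by omega, hju⟩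
  have h1I : (1 : ℕ) ∈ Set.Icc 1 (d + 1) := Set.mem_Icc.mpr ⟨le_refl 1, by omega⟩
  have hkr1 : ∀ k, k ∈ Set.Icc 1 d → k ∈ Set.Icc 1 (d + 1) := by
    intro k hk; obtain ⟨h1, h2⟩ := Set.mem_Icc.mp hk
    exact Set.mem_Icc.mpr ⟨h1, by omega⟩
  have hkr2 : ∀ k, k ∈ Set.Icc 1 d → k + 1 ∈ Set.Icc 1 (d + 1) := by
    intro k hk; obtain ⟨h1, h2⟩ := Set.mem_Icc.mp hk
    exact Set.mem_Icc.mpr ⟨by omega, by omega⟩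
  have hxs_ne : ∀ p q : ℕ, p ∈ Set.Icc 1 (d + 1) → q ∈ Set.Icc 1 (d + 1) → p ≠ q →
      xs p ≠ xs q := fun p q hp hq hne he => hne (hxsinj hp hq he)
  have hnadjI : ∀ p q : ℕ, p ∈ Set.Icc 1 (d + 1) → q ∈ Set.Icc 1 (d + 1) → p ≠ q →
      ¬ G.Adj (xs p) (xs q) := fun p q hp hq hne =>
    hIind (Finset.mem_coe.mpr (hxsI p hp)) (Finset.mem_coe.mpr (hxsI q hq))
      (hxs_ne p q hp hq hne)
  have hxy_ne : ∀ p k : ℕ, p ∈ Set.Icc 1 (d + 1) → k ∈ Set.Icc 1 d → xs p ≠ ys k :=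
    fun p k hp hk he => hysI k hk (he ▸ hxsI p hp)
  have step1 : ∀ k, k ∈ Set.Icc 1 d → G.Adj (xs k) (ys k) := by
    intro k hk
    exact induce_pair_adj (hdom k hk).2.2 (hxy_ne k k (hkr1 k hk) hk)
  have K1a : ∀ k m : ℕ, k ∈ Set.Icc 1 d → m ∈ Set.Icc 1 (d + 1) → m ≠ k + 1 →
      G.Adj (ys k) (xs m) := by
    intro k m hk hm hne
    by_cases hkm : m = k
    · rw [hkm]; exact (step1 k hk).symm
    · have hmne : xs m ≠ xs (k + 1) := hxs_ne m (k + 1) hm (hkr2 k hk) hne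
      rcases (hdom k hk).2.1 (xs m) hmne with hmem | ⟨u, hu, hadj⟩
      · simp only [Set.mem_insert_iff, Set.mem_singleton_iff] at hmem
        rcases hmem with hh | hh
        · exact absurd (hxsinj hm (hkr1 k hk) hh) hkm
        · exact absurd hh (hxy_ne m k hm hk)
      · simp only [Set.mem_insert_iff, Set.mem_singleton_iff] at hu
        rcases hu with rfl | rfl
        · exact absurd hadj (hnadjI k m (hkr1 k hk) hm (fun he => hkm he.symm))
        · exact hadj
  have K1b : ∀ k, k ∈ Set.Icc 1 d → ¬ G.Adj (ys k) (xs (k + 1)) := by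
    intro k hk hadj
    apply no_small_cds hg3 ({xs k, ys k} : Finset V)
    · exact (Finset.card_insert_le _ _).trans (by simp)
    · have hco : (↑({xs k, ys k} : Finset V) : Set V) = ({xs k, ys k} : Set V) := by simp
      constructor
      · intro v
        rw [hco]
        by_cases hv : v = xs (k + 1)
        · right; exact ⟨ys k, by simp, hv ▸ hadj⟩
        · exact (hdom k hk).2.1 v hv
      · rw [hco]; exact (hdom k hk).2.2
  have hxnotY : ∀ k, k ∈ Set.Icc 1 d → x ≠ ys k := by
    intro k hk he
    by_cases hik : i = k + 1
    · have hjk : j ≠ k + 1 := fun hh => hij (hik.trans hh.symm)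
      have hadj := K1a k j hk hjI hjk
      rw [← he] at hadj
      exact hadjj hadj
    · have hadj := K1a k i hk hiI hik
      rw [← he] at hadj
      exact hadji hadj
  have hGconn : G.Connected := conn_of_kappa hkappa
  have hijne : xs i ≠ xs j := hxs_ne i j hiI hjI hij
  have hijnadj : ¬ G.Adj (xs i) (xs j) := hnadjI i j hiI hjI hij
  -- the auxiliary contradiction: x has no neighbor outside I ∪ ys-range that is adjacent to xs 1
  have aux : ∀ w : V, G.Adj x w → (∀ k, k ∈ Set.Icc 1 d → w ≠ ys k) →
      (∀ m, m ∈ Set.Icc 1 (d + 1) → w ≠ xs m) → G.Adj w (xs 1) → False := by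
    intro w hxw hwY hwI hw1
    by_cases hxI : x ∈ I
    · have himg : Finset.image xs (Finset.Icc 1 (d + 1)) = I := by
        apply Finset.eq_of_subset_of_card_le
        · intro u hu
          obtain ⟨m, hm, he⟩ := Finset.mem_image.mp hu
          exact he ▸ hxsI m (Set.mem_Icc.mpr (Finset.mem_Icc.mp hm))
        · rw [hIcard, hα,
            Finset.card_image_of_injOn (by rw [Finset.coe_Icc]; exact hxsinj),
            Nat.card_Icc]
          omega
      obtain ⟨m0, hm0mem, hm0⟩ := Finset.mem_image.mp (himg ▸ hxI)
      have hm0I : m0 ∈ Set.Icc 1 (d + 1) := Set.mem_Icc.mpr (Finset.mem_Icc.mp hm0mem)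
      obtain ⟨hm0l, hm0u⟩ := Set.mem_Icc.mp hm0I
      have hxy : ∀ k, k ∈ Set.Icc 1 d → k ≠ m0 - 1 → G.Adj x (ys k) := by
        intro k hk hkne
        obtain ⟨hk1, hkd⟩ := Set.mem_Icc.mp hk
        by_cases hkm : k = m0
        · rw [← hm0, ← hkm]; exact step1 k hk
        · have hxne : x ≠ xs (k + 1) := by
            rw [← hm0]; exact hxs_ne m0 (k + 1) hm0I (hkr2 k hk) (by omega)
          rcases (hdom k hk).2.1 x hxne with hmem | ⟨u, hu, hadj⟩
          · simp only [Set.mem_insert_iff, Set.mem_singleton_iff] at hmem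
            rcases hmem with hh | hh
            · exact absurd (hxsinj (hkr1 k hk) hm0I (hh.symm.trans hm0.symm)) hkm
            · exact absurd hh (hxnotY k hk)
          · simp only [Set.mem_insert_iff, Set.mem_singleton_iff] at hu
            rcases hu with rfl | rfl
            · rw [← hm0] at hadj
              exact absurd hadj (hnadjI k m0 (hkr1 k hk) hm0I hkm)
            · exact hadj.symm
      by_cases hm01 : m0 = 1
      · have hwnotmem : w ∉ (Finset.Icc 1 d).image ys := by
          intro hmem; obtain ⟨k, hk, he⟩ := Finset.mem_image.mp hmem
          exact hwY k (Set.mem_Icc.mpr (Finset.mem_Icc.mp hk)) he.symm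
        have hcard : (insert w ((Finset.Icc 1 d).image ys)).card = d + 1 := by
          rw [Finset.card_insert_of_notMem hwnotmem,
            Finset.card_image_of_injOn (by rw [Finset.coe_Icc]; exact hysinj),
            Nat.card_Icc]
          omega
        have hsub : (↑(insert w ((Finset.Icc 1 d).image ys)) : Set V) ⊆ G.neighborSet x := by
          intro u hu
          simp only [Finset.coe_insert, Set.mem_insert_iff, Finset.mem_coe,
            Finset.mem_image] at hu
          rcases hu with rfl | ⟨k, hk, rfl⟩
          · exact hxw
          · obtain ⟨hk1, hkd⟩ := Finset.mem_Icc.mp hk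
            exact hxy k (Set.mem_Icc.mpr ⟨hk1, hkd⟩) (by omega)
        have hle := Set.ncard_le_ncard hsub (Set.toFinite _)
        rw [Set.ncard_coe_finset, hcard, hx] at hle
        omega
      · have hm0_1 : m0 - 1 ∈ Finset.Icc 1 d := Finset.mem_Icc.mpr ⟨by omega, by omega⟩
        have hwnotmem : w ∉ ((Finset.Icc 1 d).erase (m0 - 1)).image ys := by
          intro hmem; obtain ⟨k, hk, he⟩ := Finset.mem_image.mp hmem
          exact hwY k (Set.mem_Icc.mpr (Finset.mem_Icc.mp (Finset.mem_of_mem_erase hk)))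
            he.symm
        have herasesub : (↑((Finset.Icc 1 d).erase (m0 - 1)) : Set ℕ) ⊆ Set.Icc 1 d := by
          intro t ht
          exact Set.mem_Icc.mpr (Finset.mem_Icc.mp (Finset.mem_of_mem_erase
            (Finset.mem_coe.mp ht)))
        have hTcard : (insert w (((Finset.Icc 1 d).erase (m0 - 1)).image ys)).card = d := by
          rw [Finset.card_insert_of_notMem hwnotmem,
            Finset.card_image_of_injOn (hysinj.mono herasesub),
            Finset.card_erase_of_mem hm0_1, Nat.card_Icc]
          omega
        have hsub : (↑(insert w (((Finset.Icc 1 d).erase (m0 - 1)).image ys)) : Set V) ⊆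
            G.neighborSet x := by
          intro u hu
          simp only [Finset.coe_insert, Set.mem_insert_iff, Finset.mem_coe,
            Finset.mem_image, Finset.mem_erase] at hu
          rcases hu with rfl | ⟨k, ⟨hkne, hk⟩, rfl⟩
          · exact hxw
          · exact hxy k (Set.mem_Icc.mpr (Finset.mem_Icc.mp hk)) hkne
        have hTeq : (↑(insert w (((Finset.Icc 1 d).erase (m0 - 1)).image ys)) : Set V) =
            G.neighborSet x := by
          apply Set.eq_of_subset_of_ncard_le hsub
          rw [Set.ncard_coe_finset, hTcard, hx]
        obtain ⟨Dv, hDvc, hDvne1, hDvdom, hDvconn⟩ := vc_extract hkappa hvc (xs 1)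
        have hnadj1 : ∀ u ∈ Dv, ¬ G.Adj u (xs 1) := by
          intro u hu hadj
          apply no_small_cds hg3 Dv hDvc
          refine ⟨?_, hDvconn⟩
          intro v
          by_cases hv : v = xs 1
          · right; exact ⟨u, Finset.mem_coe.mpr hu, hv ▸ hadj⟩
          · rcases hDvdom v hv with hh | ⟨z, hz, ha⟩
            · left; exact Finset.mem_coe.mpr hh
            · right; exact ⟨z, Finset.mem_coe.mpr hz, ha⟩
        have hNadj1 : ∀ u : V, G.Adj x u → G.Adj u (xs 1) := by
          intro u hu
          have humem : u ∈ (↑(insert w (((Finset.Icc 1 d).erase (m0 - 1)).image ys)) : Set V) := by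
            rw [hTeq]; exact hu
          simp only [Finset.coe_insert, Set.mem_insert_iff, Finset.mem_coe,
            Finset.mem_image, Finset.mem_erase] at humem
          rcases humem with rfl | ⟨k, ⟨hkne, hk⟩, rfl⟩
          · exact hw1
          · obtain ⟨hk1, hkd⟩ := Finset.mem_Icc.mp hk
            exact K1a k 1 (Set.mem_Icc.mpr ⟨hk1, hkd⟩) h1I (by omega)
        have hxne1 : x ≠ xs 1 := by
          rw [← hm0]; exact hxs_ne m0 1 hm0I h1I hm01
        rcases hDvdom x hxne1 with hxDv | ⟨z, hz, hadjz⟩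
        · have hDvpos : 1 ≤ Dv.card := Finset.card_pos.mpr ⟨x, hxDv⟩
          have hcc : Dv.card = 1 ∨ Dv.card = 2 := by omega
          rcases hcc with h1 | h2
          · obtain ⟨b, hb⟩ := Finset.card_eq_one.mp h1
            have hxb : x = b := by rw [hb] at hxDv; exact Finset.mem_singleton.mp hxDv
            have hineq : xs i ≠ xs 1 := hxs_ne i 1 hiI h1I (by omega)
            rcases hDvdom (xs i) hineq with hmem | ⟨z, hz, ha⟩
            · rw [hb] at hmem
              exact hxi ((Finset.mem_singleton.mp hmem).trans hxb.symm)
            · rw [hb] at hz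
              have hzx : z = x := (Finset.mem_singleton.mp hz).trans hxb.symm
              rw [hzx] at ha
              exact hadji ha
          · obtain ⟨b1, b2, hbne, hb⟩ := Finset.card_eq_two.mp h2
            have hconn2 : (G.induce {b1, b2}).Connected := by
              rw [hb, Finset.coe_insert, Finset.coe_singleton] at hDvconn
              exact hDvconn
            have hadj12 : G.Adj b1 b2 := induce_pair_adj hconn2 hbne
            rw [hb] at hxDv
            rcases Finset.mem_insert.mp hxDv with rfl | hx2
            · exact hnadj1 b2 (by rw [hb]; simp) (hNadj1 b2 hadj12)
            · have hxb2 : x = b2 := Finset.mem_singleton.mp hx2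
              refine hnadj1 b1 (by rw [hb]; simp) (hNadj1 b1 ?_)
              rw [hxb2]; exact hadj12.symm
        · exact hnadj1 z hz (hNadj1 z hadjz.symm)
    · -- x ∉ I
      have hfN : ∀ k, k ∈ Finset.Icc 1 d →
          G.Adj x (if G.Adj x (xs k) then xs k else ys k) := by
        intro k hk'
        have hk : k ∈ Set.Icc 1 d := Set.mem_Icc.mpr (Finset.mem_Icc.mp hk')
        by_cases hadj : G.Adj x (xs k)
        · rw [if_pos hadj]; exact hadj
        · rw [if_neg hadj]
          have hxne : x ≠ xs (k + 1) := fun he => hxI (he ▸ hxsI (k + 1) (hkr2 k hk))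
          rcases (hdom k hk).2.1 x hxne with hmem | ⟨u, hu, ha⟩
          · simp only [Set.mem_insert_iff, Set.mem_singleton_iff] at hmem
            rcases hmem with hh | hh
            · exact absurd (hh ▸ hxsI k (hkr1 k hk)) hxI
            · exact absurd hh (hxnotY k hk)
          · simp only [Set.mem_insert_iff, Set.mem_singleton_iff] at hu
            rcases hu with rfl | rfl
            · exact absurd ha.symm hadj
            · exact ha.symm
      have hfinj : Set.InjOn (fun k => if G.Adj x (xs k) then xs k else ys k)
          ↑(Finset.Icc 1 d) := by
        intro p hp q hq heq
        rw [Finset.coe_Icc] at hp hq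
        have hp' : p ∈ Set.Icc 1 (d + 1) := hkr1 p hp
        have hq' : q ∈ Set.Icc 1 (d + 1) := hkr1 q hq
        simp only at heq
        by_cases h1 : G.Adj x (xs p) <;> by_cases h2 : G.Adj x (xs q)
        · rw [if_pos h1, if_pos h2] at heq; exact hxsinj hp' hq' heq
        · rw [if_pos h1, if_neg h2] at heq; exact absurd heq (hxy_ne p q hp' hq)
        · rw [if_neg h1, if_pos h2] at heq; exact absurd heq.symm (hxy_ne q p hq' hp)
        · rw [if_neg h1, if_neg h2] at heq; exact hysinj hp hq heq
      have hwnot : w ∉ (Finset.Icc 1 d).image (fun k => if G.Adj x (xs k) then xs k else ys k) := by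
        intro hmem
        obtain ⟨k, hk, he⟩ := Finset.mem_image.mp hmem
        have hk1 : k ∈ Set.Icc 1 d := Set.mem_Icc.mpr (Finset.mem_Icc.mp hk)
        by_cases hadj : G.Adj x (xs k)
        · rw [if_pos hadj] at he; exact hwI k (hkr1 k hk1) he.symm
        · rw [if_neg hadj] at he; exact hwY k hk1 he.symm
      have hTcard : (insert w ((Finset.Icc 1 d).image
          (fun k => if G.Adj x (xs k) then xs k else ys k))).card = d + 1 := by
        rw [Finset.card_insert_of_notMem hwnot, Finset.card_image_of_injOn hfinj,
          Nat.card_Icc]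
        omega
      have hsub : (↑(insert w ((Finset.Icc 1 d).image
          (fun k => if G.Adj x (xs k) then xs k else ys k))) : Set V) ⊆ G.neighborSet x := by
        intro u hu
        simp only [Finset.coe_insert, Set.mem_insert_iff, Finset.mem_coe,
          Finset.mem_image] at hu
        rcases hu with rfl | ⟨k, hk, rfl⟩
        · exact hxw
        · exact hfN k hk
      have hle := Set.ncard_le_ncard hsub (Set.toFinite _)
      rw [Set.ncard_coe_finset, hTcard, hx] at hle
      omega
  -- the main branch
  have main_branch : ∀ p q : ℕ, p ∈ Set.Icc 2 (d + 1) → q ∈ Set.Icc 2 (d + 1) → p ≠ q →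
      xs p ≠ x → xs q ≠ x → ¬ G.Adj x (xs p) → ¬ G.Adj x (xs q) →
      ∀ w : V, G.Adj (xs p) w → ¬ G.Adj w (xs q) →
      (∀ v : V, v ≠ xs q → v ≠ xs p → v ≠ w → G.Adj (xs p) v ∨ G.Adj w v) →
      G.Adj (ys (p - 1)) (ys (q - 1)) := by
    intro p q hp hq hpq hxp hxq hadp hadq w hpw hwnq hcov
    obtain ⟨hp2, hpu⟩ := Set.mem_Icc.mp hp
    obtain ⟨hq2, hqu⟩ := Set.mem_Icc.mp hq
    have hpI : p ∈ Set.Icc 1 (d + 1) := Set.mem_Icc.mpr ⟨by omega, hpu⟩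
    have hqI : q ∈ Set.Icc 1 (d + 1) := Set.mem_Icc.mpr ⟨by omega, hqu⟩
    have hp1d : p - 1 ∈ Set.Icc 1 d := Set.mem_Icc.mpr ⟨by omega, by omega⟩
    have hp11 : p - 1 + 1 = p := by omega
    have hanadj : ¬ G.Adj (ys (p - 1)) (xs p) := by
      have := K1b (p - 1) hp1d
      rwa [hp11] at this
    have haw : G.Adj w (ys (p - 1)) := by
      have h1 : ys (p - 1) ≠ xs q := (hxy_ne q (p - 1) hqI hp1d).symm
      have h2 : ys (p - 1) ≠ xs p := (hxy_ne p (p - 1) hpI hp1d).symm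
      have h3 : ys (p - 1) ≠ w := by
        intro he
        rw [← he] at hpw
        exact hanadj hpw.symm
      rcases hcov _ h1 h2 h3 with hh | hh
      · exact absurd hh.symm hanadj
      · exact hh
    have hwx : G.Adj w x := by
      have h3 : x ≠ w := by
        intro he
        rw [← he] at hpw
        exact hadp hpw.symm
      rcases hcov x (Ne.symm hxq) (Ne.symm hxp) h3 with hh | hh
      · exact absurd hh.symm hadp
      · exact hh
    have hw1 : G.Adj w (xs 1) := by
      have e1 : xs 1 ≠ xs q := hxs_ne 1 q h1I hqI (by omega)
      have e2 : xs 1 ≠ xs p := hxs_ne 1 p h1I hpI (by omega)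
      have e3 : xs 1 ≠ w := by
        intro he
        rw [← he] at hpw
        exact hnadjI p 1 hpI h1I (by omega) hpw
      rcases hcov _ e1 e2 e3 with hh | hh
      · exact absurd hh (hnadjI p 1 hpI h1I (by omega))
      · exact hh
    by_cases hwY : ∃ k, k ∈ Set.Icc 1 d ∧ w = ys k
    · obtain ⟨k, hk, hwk⟩ := hwY
      have hqk : q = k + 1 := by
        by_contra hne
        apply hwnq
        rw [hwk]
        exact K1a k q hk hqI hne
      have hkq : k = q - 1 := by omega
      rw [hwk, hkq] at haw
      exact haw.symm
    · exfalso
      have hwI' : ∀ m, m ∈ Set.Icc 1 (d + 1) → w ≠ xs m := by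
        intro m hm he
        by_cases hpm : p = m
        · rw [he, ← hpm] at hpw
          exact G.irrefl hpw
        · rw [he] at hpw
          exact hnadjI p m hpI hm hpm hpw
      exact aux w hwx.symm (fun k hk he => hwY ⟨k, hk, he⟩) hwI' hw1
  -- edge criticality at (xs i, xs j)
  have hlt := hec (xs i) (xs j) hijne hijnadj
  have hG'conn : (G ⊔ SimpleGraph.fromEdgeSet {s(xs i, xs j)}).Connected :=
    hGconn.mono le_sup_left
  obtain ⟨D, hDc, hDdom, hDconn⟩ := cds_extract hG'conn hlt
  have hG'adj : ∀ u v : V, (G ⊔ SimpleGraph.fromEdgeSet {s(xs i, xs j)}).Adj u v ↔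
      (G.Adj u v ∨ (u = xs i ∧ v = xs j) ∨ (u = xs j ∧ v = xs i)) := by
    intro u v
    simp only [SimpleGraph.sup_adj, SimpleGraph.fromEdgeSet_adj, Set.mem_singleton_iff,
      Sym2.eq_iff]
    constructor
    · rintro (hh | ⟨(⟨h1, h2⟩ | ⟨h1, h2⟩), _⟩)
      · exact Or.inl hh
      · exact Or.inr (Or.inl ⟨h1, h2⟩)
      · exact Or.inr (Or.inr ⟨h1, h2⟩)
    · rintro (hh | ⟨h1, h2⟩ | ⟨h1, h2⟩)
      · exact Or.inl hh
      · subst h1; subst h2; exact Or.inr ⟨Or.inl ⟨rfl, rfl⟩, hijne⟩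
      · subst h1; subst h2; exact Or.inr ⟨Or.inr ⟨rfl, rfl⟩, hijne.symm⟩
  by_cases hXiD : xs i ∈ D <;> by_cases hXjD : xs j ∈ D
  · -- both in D
    exfalso
    have hDeq : ({xs i, xs j} : Finset V) = D := by
      apply Finset.eq_of_subset_of_card_le
      · intro u hu
        rcases Finset.mem_insert.mp hu with rfl | hu'
        · exact hXiD
        · rw [Finset.mem_singleton.mp hu']; exact hXjD
      · rw [Finset.card_insert_of_notMem (by simp [hijne]), Finset.card_singleton]
        exact hDc
    rcases hDdom x with hmem | ⟨u, hu, hadj⟩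
    · rw [← hDeq] at hmem
      simp only [Finset.coe_insert, Set.mem_insert_iff, Finset.coe_singleton,
        Set.mem_singleton_iff] at hmem
      rcases hmem with hh | hh
      · exact hxi hh.symm
      · exact hxj hh.symm
    · rw [← hDeq] at hu
      simp only [Finset.coe_insert, Set.mem_insert_iff, Finset.coe_singleton,
        Set.mem_singleton_iff] at hu
      rcases hu with rfl | rfl
      · rcases (hG'adj _ _).mp hadj with hh | ⟨_, h2⟩ | ⟨h1, _⟩
        · exact hadji hh.symm
        · exact hxj h2.symm
        · exact hijne h1
      · rcases (hG'adj _ _).mp hadj with hh | ⟨h1, _⟩ | ⟨_, h2⟩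
        · exact hadjj hh.symm
        · exact hijne h1.symm
        · exact hxi h2.symm
  · -- xs i ∈ D, xs j ∉ D
    have hwex : ∃ w : V, w ≠ xs i ∧ w ≠ xs j ∧ D = {xs i, w} := by
      have hDpos : 1 ≤ D.card := Finset.card_pos.mpr ⟨xs i, hXiD⟩
      have hcc : D.card = 1 ∨ D.card = 2 := by omega
      rcases hcc with h1 | h2
      · exfalso
        obtain ⟨b, hb⟩ := Finset.card_eq_one.mp h1
        have hbi : b = xs i := by
          rw [hb] at hXiD; exact (Finset.mem_singleton.mp hXiD).symm
        rcases hDdom x with hmem | ⟨u, hu, hadj⟩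
        · rw [hb, hbi] at hmem
          simp only [Finset.coe_singleton, Set.mem_singleton_iff] at hmem
          exact hxi hmem.symm
        · rw [hb, hbi] at hu
          simp only [Finset.coe_singleton, Set.mem_singleton_iff] at hu
          subst hu
          rcases (hG'adj _ _).mp hadj with hh | ⟨_, h2⟩ | ⟨h1, _⟩
          · exact hadji hh.symm
          · exact hxj h2.symm
          · exact hijne h1
      · obtain ⟨b1, b2, hbne, hb⟩ := Finset.card_eq_two.mp h2
        rw [hb] at hXiD
        rcases Finset.mem_insert.mp hXiD with rfl | hb2
        · refine ⟨b2, Ne.symm hbne, ?_, hb⟩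
          intro he
          rw [hb, he] at hXjD
          exact hXjD (by simp)
        · have hbi : b2 = xs i := (Finset.mem_singleton.mp hb2).symm
          refine ⟨b1, ?_, ?_, ?_⟩
          · rw [← hbi]; exact hbne
          · intro he
            rw [hb, he] at hXjD
            exact hXjD (by simp)
          · rw [hb, ← hbi]
            exact Finset.pair_comm b1 b2
    obtain ⟨w, hwi, hwj, hDeq⟩ := hwex
    have hDset : (↑D : Set V) = ({xs i, w} : Set V) := by
      rw [hDeq]; simp
    have hiw' : (G ⊔ SimpleGraph.fromEdgeSet {s(xs i, xs j)}).Adj (xs i) w := by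
      apply induce_pair_adj (H := G ⊔ SimpleGraph.fromEdgeSet {s(xs i, xs j)})
        (a := xs i) (b := w) ?_ (Ne.symm hwi)
      rw [← hDset]
      exact hDconn
    have hiw : G.Adj (xs i) w := by
      rcases (hG'adj _ _).mp hiw' with hh | ⟨_, h2⟩ | ⟨h1, _⟩
      · exact hh
      · exact absurd h2 hwj
      · exact absurd h1 hijne
    have hcov : ∀ v : V, v ≠ xs j → v ≠ xs i → v ≠ w →
        G.Adj (xs i) v ∨ G.Adj w v := by
      intro v h1 h2 h3
      rcases hDdom v with hmem | ⟨u, hu, hadj⟩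
      · rw [hDset] at hmem
        simp only [Set.mem_insert_iff, Set.mem_singleton_iff] at hmem
        rcases hmem with hh | hh
        · exact absurd hh h2
        · exact absurd hh h3
      · rw [hDset] at hu
        simp only [Set.mem_insert_iff, Set.mem_singleton_iff] at hu
        rcases hu with rfl | rfl
        · rcases (hG'adj _ _).mp hadj with hh | ⟨_, h5⟩ | ⟨h4, _⟩
          · exact Or.inl hh
          · exact absurd h5 h1
          · exact absurd h4 hijne
        · rcases (hG'adj _ _).mp hadj with hh | ⟨h4, _⟩ | ⟨h4, _⟩
          · exact Or.inr hh
          · exact absurd h4 hwi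
          · exact absurd h4 hwj
    have hwnj : ¬ G.Adj w (xs j) := by
      intro hadj
      apply no_small_cds hg3 D hDc
      constructor
      · intro v
        rw [hDset]
        by_cases hv : v = xs j
        · right; exact ⟨w, by simp, hv ▸ hadj⟩
        · by_cases hv2 : v = xs i
          · left; simp [hv2]
          · by_cases hv3 : v = w
            · left; simp [hv3]
            · rcases hcov v hv hv2 hv3 with hh | hh
              · right; exact ⟨xs i, by simp, hh⟩
              · right; exact ⟨w, by simp, hh⟩
      · rw [hDset]
        exact pair_connected G hiw
    exact main_branch i j hi hj hij hxi hxj hadji hadjj w hiw hwnj hcov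
  · -- xs j ∈ D, xs i ∉ D
    have hwex : ∃ w : V, w ≠ xs j ∧ w ≠ xs i ∧ D = {xs j, w} := by
      have hDpos : 1 ≤ D.card := Finset.card_pos.mpr ⟨xs j, hXjD⟩
      have hcc : D.card = 1 ∨ D.card = 2 := by omega
      rcases hcc with h1 | h2
      · exfalso
        obtain ⟨b, hb⟩ := Finset.card_eq_one.mp h1
        have hbj : b = xs j := by
          rw [hb] at hXjD; exact (Finset.mem_singleton.mp hXjD).symm
        rcases hDdom x with hmem | ⟨u, hu, hadj⟩
        · rw [hb, hbj] at hmem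
          simp only [Finset.coe_singleton, Set.mem_singleton_iff] at hmem
          exact hxj hmem.symm
        · rw [hb, hbj] at hu
          simp only [Finset.coe_singleton, Set.mem_singleton_iff] at hu
          subst hu
          rcases (hG'adj _ _).mp hadj with hh | ⟨h1, _⟩ | ⟨_, h2⟩
          · exact hadjj hh.symm
          · exact hijne h1.symm
          · exact hxi h2.symm
      · obtain ⟨b1, b2, hbne, hb⟩ := Finset.card_eq_two.mp h2
        rw [hb] at hXjD
        rcases Finset.mem_insert.mp hXjD with rfl | hb2
        · refine ⟨b2, Ne.symm hbne, ?_, hb⟩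
          intro he
          rw [hb, he] at hXiD
          exact hXiD (by simp)
        · have hbj : b2 = xs j := (Finset.mem_singleton.mp hb2).symm
          refine ⟨b1, ?_, ?_, ?_⟩
          · rw [← hbj]; exact hbne
          · intro he
            rw [hb, he] at hXiD
            exact hXiD (by simp)
          · rw [hb, ← hbj]
            exact Finset.pair_comm b1 b2
    obtain ⟨w, hwj, hwi, hDeq⟩ := hwex
    have hDset : (↑D : Set V) = ({xs j, w} : Set V) := by
      rw [hDeq]; simp
    have hjw' : (G ⊔ SimpleGraph.fromEdgeSet {s(xs i, xs j)}).Adj (xs j) w := by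
      apply induce_pair_adj (H := G ⊔ SimpleGraph.fromEdgeSet {s(xs i, xs j)})
        (a := xs j) (b := w) ?_ (Ne.symm hwj)
      rw [← hDset]
      exact hDconn
    have hjw : G.Adj (xs j) w := by
      rcases (hG'adj _ _).mp hjw' with hh | ⟨h1, _⟩ | ⟨_, h2⟩
      · exact hh
      · exact absurd h1 hijne.symm
      · exact absurd h2 hwi
    have hcov : ∀ v : V, v ≠ xs i → v ≠ xs j → v ≠ w →
        G.Adj (xs j) v ∨ G.Adj w v := by
      intro v h1 h2 h3
      rcases hDdom v with hmem | ⟨u, hu, hadj⟩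
      · rw [hDset] at hmem
        simp only [Set.mem_insert_iff, Set.mem_singleton_iff] at hmem
        rcases hmem with hh | hh
        · exact absurd hh h2
        · exact absurd hh h3
      · rw [hDset] at hu
        simp only [Set.mem_insert_iff, Set.mem_singleton_iff] at hu
        rcases hu with rfl | rfl
        · rcases (hG'adj _ _).mp hadj with hh | ⟨h4, _⟩ | ⟨_, h5⟩
          · exact Or.inl hh
          · exact absurd h4 hijne.symm
          · exact absurd h5 h1
        · rcases (hG'adj _ _).mp hadj with hh | ⟨h4, _⟩ | ⟨h4, _⟩
          · exact Or.inr hh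
          · exact absurd h4 hwi
          · exact absurd h4 hwj
    have hwni : ¬ G.Adj w (xs i) := by
      intro hadj
      apply no_small_cds hg3 D hDc
      constructor
      · intro v
        rw [hDset]
        by_cases hv : v = xs i
        · right; exact ⟨w, by simp, hv ▸ hadj⟩
        · by_cases hv2 : v = xs j
          · left; simp [hv2]
          · by_cases hv3 : v = w
            · left; simp [hv3]
            · rcases hcov v hv hv2 hv3 with hh | hh
              · right; exact ⟨xs j, by simp, hh⟩
              · right; exact ⟨w, by simp, hh⟩
      · rw [hDset]
        exact pair_connected G hjw
    exact (main_branch j i hj hi (Ne.symm hij) hxj hxi hadjj hadji w hjw hwni hcov).symm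
  · -- neither in D
    exfalso
    apply no_small_cds hg3 D hDc
    constructor
    · intro v
      rcases hDdom v with hmem | ⟨u, hu, hadj⟩
      · left; exact hmem
      · right
        refine ⟨u, hu, ?_⟩
        rcases (hG'adj _ _).mp hadj with hh | ⟨h1, _⟩ | ⟨h1, _⟩
        · exact hh
        · exact absurd (h1 ▸ Finset.mem_coe.mp hu) hXiD
        · exact absurd (h1 ▸ Finset.mem_coe.mp hu) hXjD
    · have hGeq : (G ⊔ SimpleGraph.fromEdgeSet {s(xs i, xs j)}).induce (↑D : Set V) =
          G.induce (↑D : Set V) := by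
        ext ⟨v1, hv1⟩ ⟨v2, hv2⟩
        show (G ⊔ SimpleGraph.fromEdgeSet {s(xs i, xs j)}).Adj v1 v2 ↔ G.Adj v1 v2
        rw [hG'adj]
        constructor
        · rintro (hh | ⟨h1, _⟩ | ⟨h1, _⟩)
          · exact hh
          · exact absurd (h1 ▸ Finset.mem_coe.mp hv1) hXiD
          · exact absurd (h1 ▸ Finset.mem_coe.mp hv1) hXjD
        · exact Or.inl
      rw [← hGeq]
      exact hDconn
end

section
/- For every l ≥ 2, every graph G in the class 𝒢₁(l) satisfies α(G) = κ(G) = δ(G) = l; in particular, the neighborhood of the vertex v is simultaneously a maximum independent set and a minimum cut set of G. -/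
open Finset

variable {V : Type*}

/-- If `a` has no neighbours, anything reachable from `a` equals `a`. -/
private lemma isolated_reachable_eq {W : Type*} {H : SimpleGraph W} {a : W}
    (h : ∀ b, ¬ H.Adj a b) {b : W} (hr : H.Reachable a b) : a = b := by
  obtain ⟨p⟩ := hr
  cases p with
  | nil => rfl
  | cons h2 _ => exact absurd h2 (h _)

/-- every graph `G` in the class `𝒢₁(l)` (`l ≥ 2`) satisfies
`α(G) = κ(G) = δ(G) = l`; in particular the neighbourhood of the special vertex `v`
is simultaneously a maximum independent set and a minimum cut set of `G`. -/


theorem stmt_4 (l : ℕ) (hl : 2 ≤ l) (G : SimpleGraph V) [Fintype V] [DecidableEq V]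
    (v : V) (q z : Fin l → V)
    (hqinj : Function.Injective q) (hzinj : Function.Injective z)
    (hqz : ∀ i j, q i ≠ z j) (hvq : ∀ i, v ≠ q i) (hvz : ∀ i, v ≠ z i)
    (hcover : ∀ w : V, w = v ∨ (∃ i, w = q i) ∨ (∃ i, w = z i))
    (hqq : ∀ i j, G.Adj (q i) (q j) ↔ i ≠ j)
    (hzz : ∀ i j, ¬ G.Adj (z i) (z j))
    (hvzadj : ∀ i, G.Adj v (z i)) (hvqadj : ∀ i, ¬ G.Adj v (q i))
    (hzq : ∀ i j, G.Adj (z i) (q j) ↔ j ≠ i) :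
    alpha G = l ∧ kappa G = l ∧ minDeg G = l ∧
      (G.neighborSet v).Pairwise (fun a b => ¬ G.Adj a b) ∧
      (G.neighborSet v).ncard = alpha G ∧
      ¬ (G.induce (G.neighborSet v)ᶜ).Connected ∧
      (G.neighborSet v).ncard = kappa G := by
  have hlfin : Fintype.card (Fin l) = l := Fintype.card_fin l
  set Zs : Finset V := Finset.univ.image z with hZs
  have hZcard : Zs.card = l := by
    rw [hZs, Finset.card_image_of_injective _ hzinj, Finset.card_univ, hlfin]
  -- neighbours of v are exactly the z's
  have hvadj : ∀ w : V, G.Adj v w ↔ ∃ i, w = z i := by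
    intro w
    constructor
    · intro h
      rcases hcover w with rfl | ⟨i, rfl⟩ | ⟨i, rfl⟩
      · exact absurd h (G.irrefl)
      · exact absurd h (hvqadj i)
      · exact ⟨i, rfl⟩
    · rintro ⟨i, rfl⟩; exact hvzadj i
  have hNv : G.neighborSet v = (↑Zs : Set V) := by
    ext w
    simp only [SimpleGraph.mem_neighborSet, hvadj, hZs, Finset.coe_image,
      Finset.coe_univ, Set.image_univ, Set.mem_range]
    exact ⟨fun ⟨i, h⟩ => ⟨i, h.symm⟩, fun ⟨i, h⟩ => ⟨i, h.symm⟩⟩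
  -- every independent set has at most l elements
  have hindep : ∀ I : Finset V, ((↑I : Set V).Pairwise fun u w => ¬ G.Adj u w) →
      I.card ≤ l := by
    intro I hI
    by_cases hq : ∃ j, q j ∈ I
    · obtain ⟨j, hjI⟩ := hq
      by_cases hvI : v ∈ I
      · -- I ⊆ {v, q j}
        have hsub : I ⊆ {v, q j} := by
          intro w hw
          rcases hcover w with rfl | ⟨k, rfl⟩ | ⟨i, rfl⟩
          · simp
          · by_cases hkj : k = j
            · simp [hkj]
            · exact absurd ((hqq k j).2 hkj)
                (hI (Finset.mem_coe.2 hw) (Finset.mem_coe.2 hjI)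
                  (fun h => hkj (hqinj h)))
          · by_cases hij : j = i
            · exact absurd (hvzadj i)
                (hI (Finset.mem_coe.2 hvI) (Finset.mem_coe.2 hw) (hvz i))
            · exact absurd ((hzq i j).2 hij)
                (hI (Finset.mem_coe.2 hw) (Finset.mem_coe.2 hjI)
                  (fun h => hqz j i h.symm))
        calc I.card ≤ ({v, q j} : Finset V).card := Finset.card_le_card hsub
          _ ≤ 2 := Finset.card_insert_le _ _ |>.trans (by simp)
          _ ≤ l := hl
      · -- I ⊆ {z j, q j}
        have hsub : I ⊆ {z j, q j} := by
          intro w hw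
          rcases hcover w with rfl | ⟨k, rfl⟩ | ⟨i, rfl⟩
          · exact absurd hw hvI
          · by_cases hkj : k = j
            · simp [hkj]
            · exact absurd ((hqq k j).2 hkj)
                (hI (Finset.mem_coe.2 hw) (Finset.mem_coe.2 hjI)
                  (fun h => hkj (hqinj h)))
          · by_cases hij : j = i
            · simp [← hij]
            · exact absurd ((hzq i j).2 hij)
                (hI (Finset.mem_coe.2 hw) (Finset.mem_coe.2 hjI)
                  (fun h => hqz j i h.symm))
        calc I.card ≤ ({z j, q j} : Finset V).card := Finset.card_le_card hsub
          _ ≤ 2 := Finset.card_insert_le _ _ |>.trans (by simp)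
          _ ≤ l := hl
    · push_neg at hq
      by_cases hvI : v ∈ I
      · have hsub : I ⊆ {v} := by
          intro w hw
          rcases hcover w with rfl | ⟨k, rfl⟩ | ⟨i, rfl⟩
          · simp
          · exact absurd hw (hq k)
          · exact absurd (hvzadj i)
              (hI (Finset.mem_coe.2 hvI) (Finset.mem_coe.2 hw) (hvz i))
        calc I.card ≤ 1 := by simpa using Finset.card_le_card hsub
          _ ≤ l := by omega
      · have hsub : I ⊆ Zs := by
          intro w hw
          rcases hcover w with rfl | ⟨k, rfl⟩ | ⟨i, rfl⟩
          · exact absurd hw hvI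
          · exact absurd hw (hq k)
          · exact Finset.mem_image_of_mem z (Finset.mem_univ i)
        exact (Finset.card_le_card hsub).trans_eq hZcard
  have hZindep : ((↑Zs : Set V).Pairwise fun u w => ¬ G.Adj u w) := by
    intro a ha b hb _
    simp only [hZs, Finset.coe_image, Finset.coe_univ, Set.image_univ,
      Set.mem_range] at ha hb
    obtain ⟨i, rfl⟩ := ha
    obtain ⟨j, rfl⟩ := hb
    exact hzz i j
  have halpha : alpha G = l := by
    apply le_antisymm
    · exact csSup_le ⟨0, ∅, by simp⟩ (by rintro k ⟨I, rfl, hI⟩; exact hindep I hI)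
    · exact le_csSup ⟨l, by rintro k ⟨I, rfl, hI⟩; exact hindep I hI⟩
        ⟨Zs, hZcard, hZindep⟩
  -- disconnection when removing the z's
  have hdisc : ¬ (G.induce (↑Zs : Set V)ᶜ).Connected := by
    intro hconn
    have hvmem : v ∈ (↑Zs : Set V)ᶜ := by
      simp only [Set.mem_compl_iff, Finset.mem_coe, hZs, Finset.mem_image]
      rintro ⟨i, -, h⟩
      exact hvz i h.symm
    obtain ⟨j0⟩ : Nonempty (Fin l) := ⟨⟨0, by omega⟩⟩
    have hqmem : q j0 ∈ (↑Zs : Set V)ᶜ := by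
      simp only [Set.mem_compl_iff, Finset.mem_coe, hZs, Finset.mem_image]
      rintro ⟨i, -, h⟩
      exact hqz j0 i h.symm
    have hiso : ∀ b : ((↑Zs : Set V)ᶜ : Set V),
        ¬ (G.induce (↑Zs : Set V)ᶜ).Adj ⟨v, hvmem⟩ b := by
      rintro ⟨b, hb⟩ hadj
      have : G.Adj v b := hadj
      obtain ⟨i, rfl⟩ := (hvadj b).1 this
      exact hb (Finset.mem_coe.2 (Finset.mem_image_of_mem z (Finset.mem_univ i)))
    have := isolated_reachable_eq hiso (hconn.preconnected ⟨v, hvmem⟩ ⟨q j0, hqmem⟩)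
    exact hvq j0 (congrArg Subtype.val this)
  -- lower bound for kappa: removing fewer than l vertices keeps it connected & big
  have hkappaLB : ∀ k, (∃ S : Finset V, S.card = k ∧
      (¬ (G.induce (↑S : Set V)ᶜ).Connected ∨ ((↑S : Set V)ᶜ).Subsingleton)) →
      l ≤ k := by
    rintro k ⟨S, rfl, hS⟩
    by_contra hlt
    push_neg at hlt
    have hScard : S.card ≤ l - 1 := by omega
    -- at least two vertices outside S
    have htwo : ∃ a ∈ (↑S : Set V)ᶜ, ∃ b ∈ (↑S : Set V)ᶜ, a ≠ b := by
      have hT : (insert v Zs).card = l + 1 := by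
        rw [Finset.card_insert_of_notMem, hZcard]
        simp only [hZs, Finset.mem_image]
        rintro ⟨i, -, h⟩
        exact hvz i h.symm
      have hle := Finset.le_card_sdiff S (insert v Zs)
      have h2 : 1 < (insert v Zs \ S).card := by omega
      obtain ⟨a, ha, b, hb, hab⟩ := Finset.one_lt_card.1 h2
      exact ⟨a, (Finset.mem_sdiff.1 ha).2, b, (Finset.mem_sdiff.1 hb).2, hab⟩
    obtain ⟨a, ha, b, hb, hab⟩ := htwo
    have hnsub : ¬ ((↑S : Set V)ᶜ).Subsingleton := fun h => hab (h ha hb)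
    -- connectivity of the complement
    have hconn : (G.induce (↑S : Set V)ᶜ).Connected := by
      have hmemc : ∀ w : V, w ∉ S → w ∈ (↑S : Set V)ᶜ := fun w hw => hw
      have hR : ∀ (a b : V) (ha : a ∈ (↑S : Set V)ᶜ) (hb : b ∈ (↑S : Set V)ᶜ),
          G.Adj a b → (G.induce (↑S : Set V)ᶜ).Reachable ⟨a, ha⟩ ⟨b, hb⟩ :=
        fun _ _ _ _ h => SimpleGraph.Adj.reachable h
      -- a hub from which everything is reachable
      have key : ∃ hub : ((↑S : Set V)ᶜ : Set V), ∀ b : ((↑S : Set V)ᶜ : Set V),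
          (G.induce (↑S : Set V)ᶜ).Reachable hub b := by
        by_cases hvS : v ∈ S
        · -- hub is some q j0 outside S
          have hqcard : 2 ≤ (Finset.univ.filter fun i : Fin l => q i ∉ S).card := by
            have himg : (Finset.univ.filter fun i : Fin l => q i ∈ S).image q ⊆
                S.erase v := by
              intro w hw
              simp only [Finset.mem_image, Finset.mem_filter] at hw
              obtain ⟨i, ⟨-, hi⟩, rfl⟩ := hw
              exact Finset.mem_erase.2 ⟨fun h => hvq i h.symm, hi⟩
            have h1 : (Finset.univ.filter fun i : Fin l => q i ∈ S).card ≤ l - 2 := by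
              have hc1 := Finset.card_le_card himg
              rw [Finset.card_image_of_injective _ hqinj] at hc1
              rw [Finset.card_erase_of_mem hvS] at hc1
              omega
            have h2 : (Finset.univ.filter fun i : Fin l => q i ∉ S) =
                Finset.univ \ (Finset.univ.filter fun i : Fin l => q i ∈ S) :=
              Finset.filter_not _ _
            rw [h2, Finset.card_sdiff_of_subset (Finset.filter_subset _ _),
              Finset.card_univ, hlfin]
            omega
          obtain ⟨j0, hj0⟩ := Finset.card_pos.1 (by omega : 0 <
            (Finset.univ.filter fun i : Fin l => q i ∉ S).card)
          have hj0S : q j0 ∉ S := (Finset.mem_filter.1 hj0).2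
          refine ⟨⟨q j0, hmemc _ hj0S⟩, ?_⟩
          -- reach any q k outside S from the hub
          have hreachq : ∀ (k : Fin l) (hk : q k ∈ (↑S : Set V)ᶜ),
              (G.induce (↑S : Set V)ᶜ).Reachable ⟨q j0, hmemc _ hj0S⟩ ⟨q k, hk⟩ := by
            intro k hk
            by_cases hkj : j0 = k
            · subst hkj; exact SimpleGraph.Reachable.refl _
            · exact SimpleGraph.Adj.reachable ((hqq j0 k).2 hkj)
          rintro ⟨b, hbmem⟩
          rcases hcover b with rfl | ⟨k, rfl⟩ | ⟨i, rfl⟩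
          · exact absurd hvS hbmem
          · exact hreachq k hbmem
          · obtain ⟨j, hjmem, hji⟩ := Finset.exists_mem_ne
              (s := Finset.univ.filter fun i : Fin l => q i ∉ S) (by omega) i
            have hjS : q j ∉ S := (Finset.mem_filter.1 hjmem).2
            refine (hreachq j (hmemc _ hjS)).trans
              (SimpleGraph.Adj.reachable ?_)
            exact ((hzq i j).2 hji).symm
        · -- hub is v itself
          refine ⟨⟨v, hmemc _ hvS⟩, ?_⟩
          rintro ⟨b, hbmem⟩
          rcases hcover b with rfl | ⟨j, rfl⟩ | ⟨i, rfl⟩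
          · exact SimpleGraph.Reachable.refl _
          · -- b = q j
            by_cases hc : ∃ i, i ≠ j ∧ z i ∉ S
            · obtain ⟨i, hij, hiS⟩ := hc
              exact (hR v (z i) (hmemc _ hvS) (hmemc _ hiS) (hvzadj i)).trans
                (hR (z i) (q j) (hmemc _ hiS) hbmem ((hzq i j).2 hij.symm))
            · push_neg at hc
              -- all z i with i ≠ j are in S, so S = z '' (univ \ {j})
              have hsub : (Finset.univ.erase j).image z ⊆ S := by
                intro w hw
                simp only [Finset.mem_image, Finset.mem_erase] at hw
                obtain ⟨i, ⟨hij, -⟩, rfl⟩ := hw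
                exact hc i hij
              have hcard : ((Finset.univ.erase j).image z).card = l - 1 := by
                rw [Finset.card_image_of_injective _ hzinj,
                  Finset.card_erase_of_mem (Finset.mem_univ j),
                  Finset.card_univ, hlfin]
              have hSeq : (Finset.univ.erase j).image z = S :=
                Finset.eq_of_subset_of_card_le hsub (by omega)
              have hzjS : z j ∉ S := by
                rw [← hSeq]
                simp only [Finset.mem_image, Finset.mem_erase]
                rintro ⟨i, ⟨hij, -⟩, h⟩
                exact hij (hzinj h)
              obtain ⟨k, hkj⟩ : ∃ k : Fin l, k ≠ j := by
                obtain ⟨k, hk⟩ := Fintype.exists_ne_of_one_lt_card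
                  (by omega : 1 < Fintype.card (Fin l)) j
                exact ⟨k, hk⟩
              have hqkS : q k ∉ S := by
                rw [← hSeq]
                simp only [Finset.mem_image, Finset.mem_erase]
                rintro ⟨i, -, h⟩
                exact hqz k i h.symm
              exact (hR v (z j) (hmemc _ hvS) (hmemc _ hzjS) (hvzadj j)).trans
                ((hR (z j) (q k) (hmemc _ hzjS) (hmemc _ hqkS)
                  ((hzq j k).2 hkj)).trans
                  (hR (q k) (q j) (hmemc _ hqkS) hbmem ((hqq k j).2 hkj)))
          · exact hR v (z i) (hmemc _ hvS) hbmem (hvzadj i)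
      obtain ⟨hub, hhub⟩ := key
      haveI : Nonempty ((↑S : Set V)ᶜ : Set V) := ⟨hub⟩
      exact ⟨fun a b => (hhub a).symm.trans (hhub b)⟩
    rcases hS with h | h
    · exact h hconn
    · exact hnsub h
  have hkappa : kappa G = l := by
    apply le_antisymm
    · exact Nat.sInf_le ⟨Zs, hZcard, Or.inl hdisc⟩
    · exact le_csInf ⟨l, Zs, hZcard, Or.inl hdisc⟩ fun k hk => hkappaLB k hk
  -- minimum degree
  have hdegv : (G.neighborSet v).ncard = l := by
    rw [hNv, Set.ncard_coe_finset, hZcard]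
  have hminDeg : minDeg G = l := by
    apply le_antisymm
    · exact Nat.sInf_le ⟨v, hdegv⟩
    · refine le_csInf ⟨l, v, hdegv⟩ ?_
      rintro k ⟨w, rfl⟩
      rcases hcover w with rfl | ⟨j, rfl⟩ | ⟨i, rfl⟩
      · exact hdegv.ge
      · -- degree of q j : contains z i for i ≠ j and q k for one k ≠ j
        obtain ⟨k, hkj⟩ := Fintype.exists_ne_of_one_lt_card
          (by omega : 1 < Fintype.card (Fin l)) j
        have hsub : (↑(insert (q k) ((Finset.univ.erase j).image z)) : Set V) ⊆
            G.neighborSet (q j) := by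
          intro w hw
          simp only [Finset.coe_insert, Set.mem_insert_iff, Finset.coe_image,
            Finset.coe_erase, Set.mem_image] at hw
          rcases hw with rfl | ⟨i, hi, rfl⟩
          · exact ((hqq j k).2 (Ne.symm hkj))
          · simp only [Set.mem_diff, Finset.coe_univ, Set.mem_univ,
              Set.mem_singleton_iff, true_and] at hi
            exact ((hzq i j).2 (Ne.symm hi)).symm
        have hcard : (insert (q k) ((Finset.univ.erase j).image z)).card = l := by
          rw [Finset.card_insert_of_notMem, Finset.card_image_of_injective _ hzinj,
            Finset.card_erase_of_mem (Finset.mem_univ j), Finset.card_univ, hlfin]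
          · omega
          · simp only [Finset.mem_image]
            rintro ⟨i, -, h⟩
            exact hqz k i h.symm
        calc l = (↑(insert (q k) ((Finset.univ.erase j).image z)) : Set V).ncard := by
              rw [Set.ncard_coe_finset, hcard]
          _ ≤ (G.neighborSet (q j)).ncard :=
              Set.ncard_le_ncard hsub (Set.toFinite _)
      · -- degree of z i : contains v and q j for j ≠ i
        have hsub : (↑(insert v ((Finset.univ.erase i).image q)) : Set V) ⊆
            G.neighborSet (z i) := by
          intro w hw
          simp only [Finset.coe_insert, Set.mem_insert_iff, Finset.coe_image,
            Finset.coe_erase, Set.mem_image] at hw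
          rcases hw with rfl | ⟨j, hj, rfl⟩
          · exact (hvzadj i).symm
          · simp only [Set.mem_diff, Finset.coe_univ, Set.mem_univ,
              Set.mem_singleton_iff, true_and] at hj
            exact ((hzq i j).2 hj)
        have hcard : (insert v ((Finset.univ.erase i).image q)).card = l := by
          rw [Finset.card_insert_of_notMem, Finset.card_image_of_injective _ hqinj,
            Finset.card_erase_of_mem (Finset.mem_univ i), Finset.card_univ, hlfin]
          · omega
          · simp only [Finset.mem_image]
            rintro ⟨j, -, h⟩
            exact hvq j h.symm
        calc l = (↑(insert v ((Finset.univ.erase i).image q)) : Set V).ncard := by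
              rw [Set.ncard_coe_finset, hcard]
          _ ≤ (G.neighborSet (z i)).ncard :=
              Set.ncard_le_ncard hsub (Set.toFinite _)
  refine ⟨halpha, hkappa, hminDeg, ?_, ?_, ?_, ?_⟩
  · rw [hNv]; exact hZindep
  · rw [hdegv, halpha]
  · rw [hNv]; exact hdisc
  · rw [hdegv, hkappa]
end

section
/- Let G be a 3-γc-vertex critical graph, let W be a set of vertices inducing a maximum complete subgraph of G, let I be an independent set of G, and let w ∈ W. Then every minimum connected dominating set D of G − w satisfies D ∩ W = ∅ and |D ∩ I| ≤ 1. -/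
open Finset

variable {V : Type*}

lemma adj_of_connected_pair {V : Type*} (G : SimpleGraph V) {u v : V} (huv : u ≠ v)
    (hc : (G.induce {u, v}).Connected) : G.Adj u v := by
  have hu : u ∈ ({u, v} : Set V) := by simp
  have hv : v ∈ ({u, v} : Set V) := by simp
  obtain ⟨p⟩ := hc.preconnected ⟨u, hu⟩ ⟨v, hv⟩
  cases p with
  | nil => exact absurd rfl huv
  | cons hadj q =>
    rename_i x
    obtain ⟨x, hx⟩ := x
    rcases hx with hx | hx
    · subst hx
      exact absurd hadj (by simp)
    · simp only [Set.mem_singleton_iff] at hx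
      subst hx
      exact hadj

/-- let `G` be `3`-`γc`-vertex critical, `W` a maximum clique, `I` an
independent set and `w ∈ W`.  Then every minimum connected dominating set `D` of
`G - w` satisfies `D ∩ W = ∅` and `|D ∩ I| ≤ 1`. -/
theorem stmt_5 (G : SimpleGraph V) [Fintype V] [DecidableEq V]
    (h : VertexCritical3 G)
    (W : Finset V) (hWcl : (↑W : Set V).Pairwise G.Adj) (hWcard : W.card = omegaNum G)
    (I : Finset V) (hIind : (↑I : Set V).Pairwise fun u v => ¬ G.Adj u v)
    (w : V) (hw : w ∈ W)
    (D : Finset V) (hD : IsConnDomSetAvoiding G ↑D w)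
    (hDmin : D.card = gammaC (G.induce {u | u ≠ w})) :
    D ∩ W = ∅ ∧ (D ∩ I).card ≤ 1 := by
  obtain ⟨hwD, hdom, hconn⟩ := hD
  obtain ⟨-, hg3, hcrit⟩ := h
  have hcard : D.card ≤ 2 := by
    have := hcrit w
    omega
  have hWempty : D ∩ W = ∅ := by
    by_contra hne
    obtain ⟨u, hu⟩ := Finset.nonempty_iff_ne_empty.mpr hne
    rw [Finset.mem_inter] at hu
    have huw : u ≠ w := fun h => hwD (by simpa [h] using hu.1)
    have hadj : G.Adj u w := hWcl (by exact_mod_cast hu.2) (by exact_mod_cast hw) huw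
    have hcds : IsConnDomSet G ↑D := by
      refine ⟨fun v => ?_, hconn⟩
      by_cases hv : v = w
      · exact Or.inr ⟨u, by exact_mod_cast hu.1, hv ▸ hadj⟩
      · exact hdom v hv
    have : gammaC G ≤ D.card := Nat.sInf_le ⟨D, rfl, hcds⟩
    omega
  refine ⟨hWempty, ?_⟩
  by_contra hI
  push_neg at hI
  obtain ⟨u, hu, v, hv, huv⟩ := Finset.one_lt_card.mp hI
  rw [Finset.mem_inter] at hu hv
  have hsub : ({u, v} : Finset V) ⊆ D := by
    intro x hx
    rcases Finset.mem_insert.mp hx with h | h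
    · exact h ▸ hu.1
    · exact (Finset.mem_singleton.mp h) ▸ hv.1
  have hDeq : ({u, v} : Finset V) = D := by
    apply Finset.eq_of_subset_of_card_le hsub
    rw [Finset.card_insert_of_notMem (by simp [huv]), Finset.card_singleton]
    exact hcard
  have hceq : (↑D : Set V) = ({u, v} : Set V) := by
    rw [← hDeq]; simp
  rw [hceq] at hconn
  exact hIind (by exact_mod_cast hu.2) (by exact_mod_cast hv.2) huv
    (adj_of_connected_pair G huv hconn)
end
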